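/- arXiv:1503.06259 — 6 statements merged into one kernel-verified Lean document; each statement's English description precedes it below -/
import Mathlib

section
/- A Hurwitz quaternion is irreducible (prime) in the ring of Hurwitz quaternions if and only if its norm is a prime number in the integers. -/
open Quaternion

noncomputable def HurwitzQuaternions : Subring ℍ[ℚ] :=
  Subring.closure ({⟨0,1,0,0⟩, ⟨0,0,1,0⟩, ⟨1/2,1/2,1/2,1/2⟩} : Set ℍ[ℚ])

namespace Hurwitz

/-- Explicit description: coordinates are `a/2, a/2+p, a/2+q, a/2+r` with integers. -/
def inH (x : ℍ[ℚ]) : Prop :=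
  ∃ a p q r : ℤ, x.re = a/2 ∧ x.imI = a/2 + p ∧ x.imJ = a/2 + q ∧ x.imK = a/2 + r

def Hset : Subring ℍ[ℚ] where
  carrier := {x | inH x}
  zero_mem' := ⟨0,0,0,0, by norm_num⟩
  one_mem' := ⟨2,-1,-1,-1, by norm_num⟩
  add_mem' := by
    rintro x y ⟨a,p,q,r,h1,h2,h3,h4⟩ ⟨b,s,t,u,g1,g2,g3,g4⟩
    refine ⟨a+b,p+s,q+t,r+u,?_,?_,?_,?_⟩ <;>
      simp only [Quaternion.re_add, Quaternion.imI_add, Quaternion.imJ_add,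
        Quaternion.imK_add, h1,h2,h3,h4,g1,g2,g3,g4] <;> push_cast <;> ring
  neg_mem' := by
    rintro x ⟨a,p,q,r,h1,h2,h3,h4⟩
    refine ⟨-a,-p,-q,-r,?_,?_,?_,?_⟩ <;>
      simp only [Quaternion.re_neg, Quaternion.imI_neg, Quaternion.imJ_neg,
        Quaternion.imK_neg, h1,h2,h3,h4] <;> push_cast <;> ring
  mul_mem' := by
    rintro x y ⟨a,p,q,r,h1,h2,h3,h4⟩ ⟨b,s,t,u,g1,g2,g3,g4⟩
    refine ⟨-(a*b) - a*s - a*t - a*u - b*p - b*q - b*r - 2*p*s - 2*q*t - 2*r*u,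
      a*b + a*s + a*u + b*p + b*q + p*s + q*t + q*u - r*t + r*u,
      a*b + a*s + a*t + b*q + b*r + p*s - p*u + q*t + r*s + r*u,
      a*b + a*t + a*u + b*p + b*r + p*s + p*t - q*s + q*t + r*u, ?_,?_,?_,?_⟩ <;>
      simp only [Quaternion.re_mul, Quaternion.imI_mul, Quaternion.imJ_mul,
        Quaternion.imK_mul, h1,h2,h3,h4,g1,g2,g3,g4] <;> push_cast <;> ring

lemma hq_eq : HurwitzQuaternions = Hset := by
  apply le_antisymm
  · apply Subring.closure_le.2
    rintro x (rfl | rfl | rfl)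
    · exact ⟨0,1,0,0, by norm_num⟩
    · exact ⟨0,0,1,0, by norm_num⟩
    · exact ⟨1,0,0,0, by norm_num⟩
  · rintro x ⟨a,p,q,r,h1,h2,h3,h4⟩
    have hi : (⟨0,1,0,0⟩ : ℍ[ℚ]) ∈ HurwitzQuaternions :=
      Subring.subset_closure (Set.mem_insert _ _)
    have hj : (⟨0,0,1,0⟩ : ℍ[ℚ]) ∈ HurwitzQuaternions :=
      Subring.subset_closure (Set.mem_insert_of_mem _ (Set.mem_insert _ _))
    have hw : (⟨1/2,1/2,1/2,1/2⟩ : ℍ[ℚ]) ∈ HurwitzQuaternions :=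
      Subring.subset_closure (Set.mem_insert_of_mem _ (Set.mem_insert_of_mem _ rfl))
    have hk : (⟨0,0,0,1⟩ : ℍ[ℚ]) ∈ HurwitzQuaternions := by
      have := mul_mem hi hj
      have e : (⟨0,0,0,1⟩ : ℍ[ℚ]) = ⟨0,1,0,0⟩ * ⟨0,0,1,0⟩ := by
        ext <;> simp [Quaternion.re_mul, Quaternion.imI_mul, Quaternion.imJ_mul,
          Quaternion.imK_mul]
      exact e ▸ this
    have hx : x = (a : ℍ[ℚ]) * ⟨1/2,1/2,1/2,1/2⟩ + (p : ℍ[ℚ]) * ⟨0,1,0,0⟩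
        + (q : ℍ[ℚ]) * ⟨0,0,1,0⟩ + (r : ℍ[ℚ]) * ⟨0,0,0,1⟩ := by
      set W : ℍ[ℚ] := ⟨1/2,1/2,1/2,1/2⟩ with hW
      set I : ℍ[ℚ] := ⟨0,1,0,0⟩ with hI
      set J : ℍ[ℚ] := ⟨0,0,1,0⟩ with hJ
      set K : ℍ[ℚ] := ⟨0,0,0,1⟩ with hK
      ext <;> simp [Quaternion.re_mul, Quaternion.imI_mul, Quaternion.imJ_mul,
        Quaternion.imK_mul, h1,h2,h3,h4] <;> dsimp only [W, I, J, K] <;> push_cast <;> ring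
    rw [hx]
    exact add_mem (add_mem (add_mem (mul_mem (intCast_mem _ a) hw)
      (mul_mem (intCast_mem _ p) hi)) (mul_mem (intCast_mem _ q) hj))
      (mul_mem (intCast_mem _ r) hk)

lemma mem_iff {x : ℍ[ℚ]} : x ∈ HurwitzQuaternions ↔ inH x := by
  rw [hq_eq]; rfl

end Hurwitz

namespace Hurwitz

lemma star_mem {x : ℍ[ℚ]} (hx : x ∈ HurwitzQuaternions) : star x ∈ HurwitzQuaternions := by
  rw [mem_iff] at hx ⊢
  obtain ⟨a,p,q,r,h1,h2,h3,h4⟩ := hx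
  refine ⟨a, -a-p, -a-q, -a-r, ?_,?_,?_,?_⟩ <;>
    simp only [Quaternion.re_star, Quaternion.imI_star, Quaternion.imJ_star,
      Quaternion.imK_star, h1,h2,h3,h4] <;> push_cast <;> ring

lemma exists_nat_normSq {x : ℍ[ℚ]} (hx : x ∈ HurwitzQuaternions) :
    ∃ n : ℕ, normSq x = (n : ℚ) := by
  rw [mem_iff] at hx
  obtain ⟨a,p,q,r,h1,h2,h3,h4⟩ := hx
  have key : normSq x = ((a*a + a*p + a*q + a*r + p*p + q*q + r*r : ℤ) : ℚ) := by
    rw [Quaternion.normSq_def', h1,h2,h3,h4]; push_cast; ring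
  have h0 : (0:ℚ) ≤ ((a*a + a*p + a*q + a*r + p*p + q*q + r*r : ℤ) : ℚ) := by
    rw [← key]; exact Quaternion.normSq_nonneg
  have h0' : 0 ≤ a*a + a*p + a*q + a*r + p*p + q*q + r*r := by exact_mod_cast h0
  exact ⟨(a*a + a*p + a*q + a*r + p*p + q*q + r*r).toNat, by
    rw [key]; exact_mod_cast (Int.toNat_of_nonneg h0').symm⟩

/-- The natural-number norm on the Hurwitz order. -/
noncomputable def ν (x : HurwitzQuaternions) : ℕ :=
  (exists_nat_normSq x.2).choose

lemma nu_spec (x : HurwitzQuaternions) : ((ν x : ℕ) : ℚ) = normSq (x : ℍ[ℚ]) :=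
  (exists_nat_normSq x.2).choose_spec.symm

lemma nu_mul (x y : HurwitzQuaternions) : ν (x * y) = ν x * ν y := by
  have : ((ν (x*y) : ℕ) : ℚ) = ((ν x * ν y : ℕ) : ℚ) := by
    rw [nu_spec]; push_cast [nu_spec]
    exact_mod_cast map_mul normSq (x : ℍ[ℚ]) (y : ℍ[ℚ])
  exact_mod_cast this

lemma nu_eq_zero {x : HurwitzQuaternions} : ν x = 0 ↔ x = 0 := by
  constructor
  · intro h
    have : normSq (x : ℍ[ℚ]) = 0 := by rw [← nu_spec, h]; norm_num
    have := Quaternion.normSq_eq_zero.1 this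
    exact Subtype.ext this
  · rintro rfl
    have : ((ν (0 : HurwitzQuaternions) : ℕ) : ℚ) = 0 := by
      rw [nu_spec]; simp
    exact_mod_cast this

lemma nu_one : ν (1 : HurwitzQuaternions) = 1 := by
  have : ((ν (1 : HurwitzQuaternions) : ℕ) : ℚ) = 1 := by rw [nu_spec]; simp
  exact_mod_cast this

lemma isUnit_iff_nu {x : HurwitzQuaternions} : IsUnit x ↔ ν x = 1 := by
  constructor
  · rintro ⟨u, rfl⟩
    have h := nu_mul (u : HurwitzQuaternions) ((u⁻¹ : Units _) : HurwitzQuaternions)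
    have h2 : ν ((u : HurwitzQuaternions) * ((u⁻¹ : Units _) : HurwitzQuaternions)) = 1 := by
      rw [← Units.val_mul, mul_inv_cancel, Units.val_one, nu_one]
    rw [h2] at h
    exact (Nat.eq_one_of_mul_eq_one_right h.symm)
  · intro h
    have hn : normSq (x : ℍ[ℚ]) = 1 := by rw [← nu_spec, h]; norm_num
    refine ⟨⟨x, ⟨star (x : ℍ[ℚ]), star_mem x.2⟩, ?_, ?_⟩, rfl⟩
    · apply Subtype.ext
      show (x : ℍ[ℚ]) * star (x : ℍ[ℚ]) = 1
      rw [Quaternion.self_mul_star, hn]; norm_num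
    · apply Subtype.ext
      show star (x : ℍ[ℚ]) * (x : ℍ[ℚ]) = 1
      rw [Quaternion.star_mul_self, hn]; norm_num

end Hurwitz

namespace Hurwitz

private lemma sq_bound {d : ℚ} (h : |d| ≤ 1/2) : d^2 ≤ 1/4 := by
  have h1 := abs_le.1 h
  nlinarith [h1.1, h1.2]

private lemma sq_bound_lt {d : ℚ} (h : |d| ≤ 1/2) (h' : |d| ≠ 1/2) : d^2 < 1/4 := by
  have h2 : |d| < 1/2 := lt_of_le_of_ne h h'
  have h1 := abs_lt.1 h2
  nlinarith [h1.1, h1.2]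

private lemma half_odd {d : ℚ} (h : |d| = 1/2) : ∃ e : ℤ, e % 2 = 1 ∧ d = e/2 := by
  rcases (abs_eq (by norm_num : (0:ℚ) ≤ 1/2)).1 h with h|h
  · exact ⟨1, by norm_num, by rw [h]; norm_num⟩
  · exact ⟨-1, by decide, by rw [h]; norm_num⟩

lemma round_approx (x : ℍ[ℚ]) :
    ∃ h ∈ HurwitzQuaternions, normSq (x - h) < 1 := by
  set l : ℍ[ℚ] := ⟨(round x.re : ℤ), (round x.imI : ℤ), (round x.imJ : ℤ), (round x.imK : ℤ)⟩
    with hl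
  have hb1 : |x.re - (round x.re : ℚ)| ≤ 1/2 := abs_sub_round _
  have hb2 : |x.imI - (round x.imI : ℚ)| ≤ 1/2 := abs_sub_round _
  have hb3 : |x.imJ - (round x.imJ : ℚ)| ≤ 1/2 := abs_sub_round _
  have hb4 : |x.imK - (round x.imK : ℚ)| ≤ 1/2 := abs_sub_round _
  by_cases hall : |x.re - (round x.re : ℚ)| = 1/2 ∧ |x.imI - (round x.imI : ℚ)| = 1/2 ∧
      |x.imJ - (round x.imJ : ℚ)| = 1/2 ∧ |x.imK - (round x.imK : ℚ)| = 1/2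
  · -- then x itself is a Hurwitz quaternion
    obtain ⟨h1, h2, h3, h4⟩ := hall
    obtain ⟨e0, he0, hd0⟩ := half_odd h1
    obtain ⟨e1, he1, hd1⟩ := half_odd h2
    obtain ⟨e2, he2, hd2⟩ := half_odd h3
    obtain ⟨e3, he3, hd3⟩ := half_odd h4
    refine ⟨x, ?_, by simp⟩
    rw [mem_iff]
    obtain ⟨t1, ht1⟩ : ∃ t : ℤ, e1 = e0 + 2*t := ⟨(e1-e0)/2, by omega⟩
    obtain ⟨t2, ht2⟩ : ∃ t : ℤ, e2 = e0 + 2*t := ⟨(e2-e0)/2, by omega⟩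
    obtain ⟨t3, ht3⟩ : ∃ t : ℤ, e3 = e0 + 2*t := ⟨(e3-e0)/2, by omega⟩
    refine ⟨2*round x.re + e0, round x.imI - round x.re + t1,
      round x.imJ - round x.re + t2, round x.imK - round x.re + t3, ?_, ?_, ?_, ?_⟩
    · push_cast; linarith [hd0]
    · have h1' : (e1:ℚ) = e0 + 2*t1 := by exact_mod_cast congrArg (Int.cast : ℤ → ℚ) ht1
      push_cast; linarith [hd1]
    · have h2' : (e2:ℚ) = e0 + 2*t2 := by exact_mod_cast congrArg (Int.cast : ℤ → ℚ) ht2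
      push_cast; linarith [hd2]
    · have h3' : (e3:ℚ) = e0 + 2*t3 := by exact_mod_cast congrArg (Int.cast : ℤ → ℚ) ht3
      push_cast; linarith [hd3]
  · refine ⟨l, ?_, ?_⟩
    · rw [mem_iff]
      refine ⟨2*round x.re, round x.imI - round x.re,
        round x.imJ - round x.re, round x.imK - round x.re, ?_, ?_, ?_, ?_⟩ <;>
        · show ((_ : ℤ) : ℚ) = _; push_cast; ring
    · have hsum : normSq (x - l) = (x.re - (round x.re : ℚ))^2 + (x.imI - (round x.imI : ℚ))^2
          + (x.imJ - (round x.imJ : ℚ))^2 + (x.imK - (round x.imK : ℚ))^2 := by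
        rw [Quaternion.normSq_def']
        rfl
      rw [hsum]
      push_neg at hall
      by_cases c1 : |x.re - (round x.re : ℚ)| = 1/2
      · by_cases c2 : |x.imI - (round x.imI : ℚ)| = 1/2
        · by_cases c3 : |x.imJ - (round x.imJ : ℚ)| = 1/2
          · have c4 := hall c1 c2 c3
            have := sq_bound_lt hb4 c4
            nlinarith [sq_bound hb1, sq_bound hb2, sq_bound hb3]
          · have := sq_bound_lt hb3 c3
            nlinarith [sq_bound hb1, sq_bound hb2, sq_bound hb4]
        · have := sq_bound_lt hb2 c2
          nlinarith [sq_bound hb1, sq_bound hb3, sq_bound hb4]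
      · have := sq_bound_lt hb1 c1
        nlinarith [sq_bound hb2, sq_bound hb3, sq_bound hb4]

end Hurwitz

namespace Hurwitz

lemma coe_ne_zero {b : HurwitzQuaternions} (hb : b ≠ 0) : (b : ℍ[ℚ]) ≠ 0 :=
  fun h => hb (Subtype.ext h)

lemma division (a b : HurwitzQuaternions) (hb : b ≠ 0) :
    ∃ q : HurwitzQuaternions, ν (a - b*q) < ν b := by
  obtain ⟨h, hmem, hlt⟩ := round_approx ((b : ℍ[ℚ])⁻¹ * (a : ℍ[ℚ]))
  refine ⟨⟨h, hmem⟩, ?_⟩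
  have hb' : (b : ℍ[ℚ]) ≠ 0 := coe_ne_zero hb
  have key : ((a - b*(⟨h,hmem⟩ : HurwitzQuaternions) : HurwitzQuaternions) : ℍ[ℚ])
      = (b : ℍ[ℚ]) * ((b : ℍ[ℚ])⁻¹ * (a : ℍ[ℚ]) - h) := by
    rw [mul_sub, mul_inv_cancel_left₀ hb']
    push_cast
    ring
  have hq : ((ν (a - b*(⟨h,hmem⟩ : HurwitzQuaternions)) : ℕ) : ℚ) < ((ν b : ℕ) : ℚ) := by
    rw [nu_spec, nu_spec, key, map_mul]
    have hpos : 0 < normSq (b : ℍ[ℚ]) :=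
      lt_of_le_of_ne Quaternion.normSq_nonneg (Ne.symm (Quaternion.normSq_ne_zero.2 hb'))
    calc normSq (b : ℍ[ℚ]) * normSq ((b : ℍ[ℚ])⁻¹ * (a:ℍ[ℚ]) - h)
        < normSq (b : ℍ[ℚ]) * 1 := by exact mul_lt_mul_of_pos_left hlt hpos
      _ = normSq (b : ℍ[ℚ]) := mul_one _
  exact_mod_cast hq

set_option maxHeartbeats 1000000 in
lemma gcd_aux (a b : HurwitzQuaternions) (ha : a ≠ 0) :
    ∃ d x y e f : HurwitzQuaternions, d = a*x + b*y ∧ a = d*e ∧ b = d*f := by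
  set T := {n : ℕ | ∃ x y : HurwitzQuaternions, a*x + b*y ≠ 0 ∧ ν (a*x + b*y) = n} with hT
  have hTne : T.Nonempty := ⟨ν a, 1, 0, by simpa using ha, by simp⟩
  obtain ⟨x₀, y₀, hd0, hdν⟩ : ∃ x y : HurwitzQuaternions,
      a*x + b*y ≠ 0 ∧ ν (a*x + b*y) = sInf T := Nat.sInf_mem hTne
  set d := a*x₀ + b*y₀ with hd
  have hdiv : ∀ x y : HurwitzQuaternions, ∃ q, a*x + b*y = d*q := by
    intro x y
    obtain ⟨q, hq⟩ := division (a*x+b*y) d hd0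
    have hr : a*x + b*y - d*q = a*(x - x₀*q) + b*(y - y₀*q) := by
      rw [hd]; noncomm_ring
    by_cases hz : a*x + b*y - d*q = 0
    · exact ⟨q, by rwa [sub_eq_zero] at hz⟩
    · exfalso
      have hmem : ν (a*(x - x₀*q) + b*(y - y₀*q)) ∈ T :=
        ⟨x - x₀*q, y - y₀*q, by rw [← hr]; exact hz, rfl⟩
      have hle := Nat.sInf_le hmem
      rw [← hr] at hle
      omega
  obtain ⟨e, he⟩ := hdiv 1 0
  obtain ⟨f, hf⟩ := hdiv 0 1
  exact ⟨d, x₀, y₀, e, f, rfl, by simpa using he, by simpa using hf⟩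

end Hurwitz

namespace Hurwitz

lemma nu_eq_of {w : HurwitzQuaternions} {n : ℕ} (h : normSq (w : ℍ[ℚ]) = (n:ℚ)) : ν w = n := by
  have := (nu_spec w).trans h
  exact_mod_cast this

lemma nu_natCast (p : ℕ) : ν (p : HurwitzQuaternions) = p^2 := by
  apply nu_eq_of
  have : ((p : HurwitzQuaternions) : ℍ[ℚ]) = ((p:ℕ) : ℍ[ℚ]) := by push_cast; ring
  rw [this, Quaternion.normSq_natCast]
  push_cast; ring

lemma not_isUnit_natCast {p : ℕ} (hp : p.Prime) : ¬ IsUnit (p : HurwitzQuaternions) := by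
  rw [isUnit_iff_nu, nu_natCast]
  nlinarith [hp.two_le]

/-- No Hurwitz quaternion with real part 1 is divisible by an odd prime `p`. -/
lemma re_one_imp {p : ℕ} (hp : p.Prime) (hp2 : p ≠ 2) {x g : ℍ[ℚ]}
    (hg : g ∈ HurwitzQuaternions) (hre : x.re = 1) (h : x = (p:ℍ[ℚ]) * g) : False := by
  obtain ⟨c, _, _, _, hc, -, -, -⟩ := mem_iff.1 hg
  have h1 : (1:ℚ) = p * ((c:ℚ)/2) := by
    rw [← hre, h, ← hc]; simp
  have h2 : (p:ℤ) * c = 2 := by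
    have : (p:ℚ) * (c:ℚ) = 2 := by linarith
    exact_mod_cast this
  have h3 : (p:ℕ) ∣ 2 := by
    have : (p:ℤ) ∣ 2 := ⟨c, h2.symm⟩
    exact_mod_cast this
  rcases (Nat.prime_two.eq_one_or_self_of_dvd p h3) with h|h
  · exact hp.one_lt.ne' h
  · exact hp2 h

set_option maxHeartbeats 1600000 in
lemma prime_reducible (p : ℕ) (hp : p.Prime) :
    ∃ w₁ w₂ : HurwitzQuaternions, ¬IsUnit w₁ ∧ ¬IsUnit w₂ ∧
      w₁ * w₂ = (p : HurwitzQuaternions) := by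
  by_cases hp2 : p = 2
  · subst hp2
    have h1 : (⟨1,1,0,0⟩ : ℍ[ℚ]) ∈ HurwitzQuaternions := mem_iff.2 ⟨2,0,-1,-1, by norm_num⟩
    have h2 : (⟨1,-1,0,0⟩ : ℍ[ℚ]) ∈ HurwitzQuaternions := mem_iff.2 ⟨2,-2,-1,-1, by norm_num⟩
    refine ⟨⟨_,h1⟩, ⟨_,h2⟩, ?_, ?_, ?_⟩
    · rw [isUnit_iff_nu, nu_eq_of (n := 2) (by rw [Quaternion.normSq_def']; norm_num)]
      norm_num
    · rw [isUnit_iff_nu, nu_eq_of (n := 2) (by rw [Quaternion.normSq_def']; norm_num)]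
      norm_num
    · apply Subtype.ext
      have : (((2:ℕ) : HurwitzQuaternions) : ℍ[ℚ]) = ((2:ℕ) : ℍ[ℚ]) :=
        map_natCast (SubringClass.subtype HurwitzQuaternions) 2
      show (⟨1,1,0,0⟩ : ℍ[ℚ]) * ⟨1,-1,0,0⟩ = (((2:ℕ) : HurwitzQuaternions) : ℍ[ℚ])
      rw [this, show ((2:ℕ):ℍ[ℚ]) = ((1:ℍ[ℚ]) + 1) by push_cast; norm_num]
      ext <;> simp [Quaternion.re_mul, Quaternion.imI_mul, Quaternion.imJ_mul,
        Quaternion.imK_mul]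
  · haveI : Fact p.Prime := ⟨hp⟩
    obtain ⟨a, b, hab⟩ := ZMod.sq_add_sq p (-1)
    obtain ⟨a₀, ha₀⟩ : ∃ z : ℤ, (z : ZMod p) = a :=
      ⟨a.val, by simp [ZMod.natCast_val, ZMod.intCast_cast]⟩
    obtain ⟨b₀, hb₀⟩ : ∃ z : ℤ, (z : ZMod p) = b :=
      ⟨b.val, by simp [ZMod.natCast_val, ZMod.intCast_cast]⟩
    have hdvd : (p:ℤ) ∣ 1 + a₀^2 + b₀^2 := by
      rw [← ZMod.intCast_zmod_eq_zero_iff_dvd]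
      push_cast
      rw [ha₀, hb₀]
      linear_combination hab
    have hu : (⟨1,(a₀:ℚ),(b₀:ℚ),0⟩ : ℍ[ℚ]) ∈ HurwitzQuaternions :=
      mem_iff.2 ⟨2, a₀-1, b₀-1, -1, by push_cast; norm_num⟩
    set u : HurwitzQuaternions := ⟨⟨1,(a₀:ℚ),(b₀:ℚ),0⟩, hu⟩ with hu'
    have hure : ((u : ℍ[ℚ])).re = 1 := rfl
    have hune : u ≠ 0 := by
      intro h
      have hv := congrArg Subtype.val h
      push_cast at hv
      rw [Quaternion.ext_iff] at hv
      have := hv.1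
      norm_num at this
    have hns : normSq (u : ℍ[ℚ]) = 1 + (a₀:ℚ)^2 + (b₀:ℚ)^2 := by
      rw [Quaternion.normSq_def']
      show (1:ℚ)^2 + (a₀:ℚ)^2 + (b₀:ℚ)^2 + (0:ℚ)^2 = _
      ring
    have hnu : (ν u : ℤ) = 1 + a₀^2 + b₀^2 := by
      have : ((ν u : ℤ) : ℚ) = ((1 + a₀^2 + b₀^2 : ℤ) : ℚ) := by
        push_cast
        rw [← hns]
        exact_mod_cast nu_spec u
      exact_mod_cast this
    have hpdvd : p ∣ ν u := by
      have : (p:ℤ) ∣ (ν u : ℤ) := hnu ▸ hdvd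
      exact_mod_cast this
    obtain ⟨d, x, y, e, f, hdxy, hue, hpf⟩ := gcd_aux u (p : HurwitzQuaternions) hune
    by_cases hdu : IsUnit d
    · exfalso
      obtain ⟨dᵤ, hdu'⟩ := hdu
      set dinv : HurwitzQuaternions := ((dᵤ⁻¹ : _) : HurwitzQuaternions) with hdinv
      have hdd : d * dinv = 1 := by rw [← hdu']; exact dᵤ.mul_inv
      have h1 : (1 : HurwitzQuaternions) = u * (x * dinv) + (p:HurwitzQuaternions) * (y * dinv) := by
        calc (1:HurwitzQuaternions) = d * dinv := hdd.symm
          _ = (u*x + (p:HurwitzQuaternions)*y) * dinv := by rw [← hdxy]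
          _ = u*(x*dinv) + (p:HurwitzQuaternions)*(y*dinv) := by noncomm_ring
      obtain ⟨m, hm⟩ := hpdvd
      set A : ℍ[ℚ] := ((x*dinv : HurwitzQuaternions) : ℍ[ℚ]) with hA
      set B : ℍ[ℚ] := ((y*dinv : HurwitzQuaternions) : ℍ[ℚ]) with hB
      have hv : (1:ℍ[ℚ]) = (u:ℍ[ℚ]) * A + (p:ℍ[ℚ]) * B := by
        have := congrArg Subtype.val h1
        push_cast at this
        exact this
      have hnormu : ((ν u : ℕ) : ℚ) = normSq (u:ℍ[ℚ]) := nu_spec u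
      have key : star (u : ℍ[ℚ]) = (p:ℍ[ℚ]) * ((m:ℍ[ℚ]) * A + star (u:ℍ[ℚ]) * B) := by
        have hcomm : (p:ℍ[ℚ]) * star (u:ℍ[ℚ]) = star (u:ℍ[ℚ]) * (p:ℍ[ℚ]) :=
          (Nat.cast_commute p _).eq
        calc star (u:ℍ[ℚ]) = star (u:ℍ[ℚ]) * 1 := (mul_one _).symm
          _ = star (u:ℍ[ℚ]) * ((u:ℍ[ℚ]) * A + (p:ℍ[ℚ]) * B) := by rw [← hv]
          _ = (star (u:ℍ[ℚ]) * (u:ℍ[ℚ])) * A + star (u:ℍ[ℚ]) * ((p:ℍ[ℚ]) * B) := by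
              noncomm_ring
          _ = ((ν u : ℕ) : ℍ[ℚ]) * A + star (u:ℍ[ℚ]) * ((p:ℍ[ℚ]) * B) := by
              rw [Quaternion.star_mul_self, ← hnormu]
              norm_cast
          _ = (p:ℍ[ℚ]) * ((m:ℍ[ℚ]) * A + star (u:ℍ[ℚ]) * B) := by
              rw [hm]
              push_cast
              rw [show star (u:ℍ[ℚ]) * ((p:ℍ[ℚ]) * B)
                  = (p:ℍ[ℚ]) * (star (u:ℍ[ℚ]) * B) by
                rw [← mul_assoc, ← hcomm, mul_assoc]]
              noncomm_ring
      have hγmem : ((m:ℍ[ℚ]) * A + star (u:ℍ[ℚ]) * B) ∈ HurwitzQuaternions := by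
        refine add_mem (mul_mem (natCast_mem _ m) (x*dinv).2)
          (mul_mem (star_mem u.2) (y*dinv).2)
      exact re_one_imp hp hp2 hγmem ((Quaternion.re_star _).trans hure) key
    · by_cases hfu : IsUnit f
      · exfalso
        obtain ⟨fᵤ, hfu'⟩ := hfu
        set finv : HurwitzQuaternions := ((fᵤ⁻¹ : _) : HurwitzQuaternions) with hfinv
        have hff : f * finv = 1 := by rw [← hfu']; exact fᵤ.mul_inv
        have hd : d = (p:HurwitzQuaternions) * finv := by
          calc d = d * (f * finv) := by rw [hff, mul_one]
            _ = (d * f) * finv := by rw [mul_assoc]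
            _ = (p:HurwitzQuaternions) * finv := by rw [← hpf]
        have hu2 : u = (p:HurwitzQuaternions) * (finv * e) := by
          rw [hue, hd, mul_assoc]
        have hval : (u : ℍ[ℚ]) = (p:ℍ[ℚ]) * ((finv * e : HurwitzQuaternions) : ℍ[ℚ]) := by
          have := congrArg Subtype.val hu2
          push_cast at this
          exact this
        exact re_one_imp hp hp2 (finv * e).2 hure hval
      · exact ⟨d, f, hdu, hfu, hpf.symm⟩

end Hurwitz

open Hurwitz in
set_option maxHeartbeats 1600000 in
/-- A Hurwitz quaternion is irreducible iff its norm is a prime number. -/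
theorem hurwitz_irreducible_iff_norm_prime (P : HurwitzQuaternions) :
    Irreducible P ↔ ∃ q : ℕ, q.Prime ∧ Quaternion.normSq (P : ℍ[ℚ]) = q := by
  constructor
  · intro hP
    have hP0 : P ≠ 0 := hP.ne_zero
    have hn0 : ν P ≠ 0 := fun h => hP0 (nu_eq_zero.1 h)
    have hn1 : ν P ≠ 1 := fun h => hP.not_isUnit (isUnit_iff_nu.2 h)
    set n := ν P with hn
    set p := n.minFac with hpdef
    have hp : p.Prime := Nat.minFac_prime hn1
    have hpn : p ∣ n := Nat.minFac_dvd n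
    suffices h : n = p by
      refine ⟨p, hp, ?_⟩
      rw [← nu_spec]
      exact_mod_cast congrArg (Nat.cast : ℕ → ℚ) h
    have hnotassoc : ∀ g : HurwitzQuaternions, IsUnit g →
        P ≠ (p:HurwitzQuaternions) * g := by
      intro g hg hPe
      obtain ⟨w₁, w₂, hw₁, hw₂, hww⟩ := prime_reducible p hp
      have hsplit : P = w₁ * (w₂ * g) := by rw [hPe, ← hww, mul_assoc]
      rcases hP.isUnit_or_isUnit hsplit with h|h
      · exact hw₁ h
      · obtain ⟨gᵤ, rfl⟩ := hg
        exact hw₂ ((Units.isUnit_mul_units w₂ gᵤ).1 h)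
    obtain ⟨d, x, y, e, f, hdxy, hPe, hpf⟩ := gcd_aux P (p:HurwitzQuaternions) hP0
    rcases hP.isUnit_or_isUnit hPe with hdu | heu
    · -- `d` is a unit: the ideal (P, p) is everything; conjugation argument
      exfalso
      obtain ⟨dᵤ, hdu'⟩ := hdu
      set dinv : HurwitzQuaternions := ((dᵤ⁻¹ : _) : HurwitzQuaternions) with hdinv
      have hdd : d * dinv = 1 := by rw [← hdu']; exact dᵤ.mul_inv
      have h1 : (1 : HurwitzQuaternions) = P * (x*dinv) + (p:HurwitzQuaternions) * (y*dinv) := by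
        calc (1:HurwitzQuaternions) = d * dinv := hdd.symm
          _ = (P*x + (p:HurwitzQuaternions)*y) * dinv := by rw [← hdxy]
          _ = P*(x*dinv) + (p:HurwitzQuaternions)*(y*dinv) := by noncomm_ring
      obtain ⟨m, hm⟩ := hpn
      set A : ℍ[ℚ] := ((x*dinv : HurwitzQuaternions) : ℍ[ℚ]) with hA
      set B : ℍ[ℚ] := ((y*dinv : HurwitzQuaternions) : ℍ[ℚ]) with hB
      have hv : (1:ℍ[ℚ]) = (P:ℍ[ℚ]) * A + (p:ℍ[ℚ]) * B := by
        have := congrArg Subtype.val h1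
        push_cast at this
        exact this
      have hnormu : ((n : ℕ) : ℚ) = normSq (P:ℍ[ℚ]) := nu_spec P
      have hcomm : (p:ℍ[ℚ]) * star (P:ℍ[ℚ]) = star (P:ℍ[ℚ]) * (p:ℍ[ℚ]) :=
        (Nat.cast_commute p _).eq
      have key : star (P : ℍ[ℚ]) = (p:ℍ[ℚ]) * ((m:ℍ[ℚ]) * A + star (P:ℍ[ℚ]) * B) := by
        calc star (P:ℍ[ℚ]) = star (P:ℍ[ℚ]) * 1 := (mul_one _).symm
          _ = star (P:ℍ[ℚ]) * ((P:ℍ[ℚ]) * A + (p:ℍ[ℚ]) * B) := by rw [← hv]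
          _ = (star (P:ℍ[ℚ]) * (P:ℍ[ℚ])) * A + star (P:ℍ[ℚ]) * ((p:ℍ[ℚ]) * B) := by
              noncomm_ring
          _ = ((n : ℕ) : ℍ[ℚ]) * A + star (P:ℍ[ℚ]) * ((p:ℍ[ℚ]) * B) := by
              rw [Quaternion.star_mul_self, ← hnormu]
              norm_cast
          _ = (p:ℍ[ℚ]) * ((m:ℍ[ℚ]) * A + star (P:ℍ[ℚ]) * B) := by
              rw [hm]
              push_cast
              rw [show star (P:ℍ[ℚ]) * ((p:ℍ[ℚ]) * B)
                  = (p:ℍ[ℚ]) * (star (P:ℍ[ℚ]) * B) by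
                rw [← mul_assoc, ← hcomm, mul_assoc]]
              noncomm_ring
      set g : ℍ[ℚ] := (m:ℍ[ℚ]) * A + star (P:ℍ[ℚ]) * B with hgdef
      have hgmem : g ∈ HurwitzQuaternions :=
        add_mem (mul_mem (natCast_mem _ m) (x*dinv).2)
          (mul_mem (star_mem P.2) (y*dinv).2)
      have hPval : (P : ℍ[ℚ]) = (p:ℍ[ℚ]) * star g := by
        have h2 := congrArg star key
        rw [star_star, star_mul] at h2
        rw [h2, star_natCast]
        exact ((Nat.cast_commute p (star g)).eq).symm
      have hPeq : P = (p:HurwitzQuaternions) * (⟨star g, star_mem hgmem⟩ : HurwitzQuaternions) := by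
        apply Subtype.ext
        push_cast
        exact hPval
      rcases hP.isUnit_or_isUnit hPeq with h|h
      · exact not_isUnit_natCast hp h
      · exact hnotassoc _ h hPeq
    · -- `e` is a unit: `P` left-divides `p`
      obtain ⟨eᵤ, heu'⟩ := heu
      set einv : HurwitzQuaternions := ((eᵤ⁻¹ : _) : HurwitzQuaternions) with heinv
      have hee : e * einv = 1 := by rw [← heu']; exact eᵤ.mul_inv
      have hde : d = P * einv := by
        calc d = d * (e * einv) := by rw [hee, mul_one]
          _ = (d * e) * einv := by rw [mul_assoc]
          _ = P * einv := by rw [← hPe]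
      have hppe : (p:HurwitzQuaternions) = P * (einv * f) := by
        rw [hpf, hde, mul_assoc]
      have hnorm : p^2 = n * ν (einv * f) := by
        have h2 := nu_mul P (einv*f)
        rw [← hppe, nu_natCast] at h2
        exact h2
      have hndvd : n ∣ p^2 := ⟨ν (einv*f), hnorm⟩
      obtain ⟨i, hi, hni⟩ := (Nat.dvd_prime_pow hp).1 hndvd
      interval_cases i
      · simp at hni; exact absurd hni hn1
      · simpa using hni
      · -- n = p^2 : then P is associate to p, contradiction
        exfalso
        have hk : ν (einv * f) = 1 := by
          have hppos : 0 < p := hp.pos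
          rw [hni] at hnorm
          have : p^2 * 1 = p^2 * ν (einv*f) := by rw [mul_one]; exact hnorm
          exact (Nat.eq_of_mul_eq_mul_left (by positivity) this).symm
        have hku : IsUnit (einv * f) := isUnit_iff_nu.2 hk
        obtain ⟨kᵤ, hku'⟩ := hku
        have hPassoc : P = (p:HurwitzQuaternions) * ((kᵤ⁻¹ : _) : HurwitzQuaternions) := by
          have hkk : (einv * f) * ((kᵤ⁻¹ : _) : HurwitzQuaternions) = 1 := by
            rw [← hku']; exact kᵤ.mul_inv
          calc P = P * ((einv * f) * ((kᵤ⁻¹ : _) : HurwitzQuaternions)) := by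
                rw [hkk, mul_one]
            _ = (P * (einv * f)) * ((kᵤ⁻¹ : _) : HurwitzQuaternions) := by noncomm_ring
            _ = (p:HurwitzQuaternions) * ((kᵤ⁻¹ : _) : HurwitzQuaternions) := by rw [← hppe]
        exact hnotassoc _ (Units.isUnit _) hPassoc
  · rintro ⟨q, hq, hnorm⟩
    have hν : ν P = q := nu_eq_of hnorm
    constructor
    · intro h
      rw [isUnit_iff_nu, hν] at h
      exact hq.one_lt.ne' h
    · intro a b hab
      have hmul := nu_mul a b
      rw [← hab, hν] at hmul
      rcases (hq.eq_one_or_self_of_dvd (ν a) ⟨ν b, hmul⟩) with h|h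
      · exact Or.inl (isUnit_iff_nu.2 h)
      · refine Or.inr (isUnit_iff_nu.2 ?_)
        rw [h] at hmul
        have hqpos := hq.pos
        nlinarith [hmul]
end

section
/- For an odd prime p, the quotient ring of the Hurwitz quaternions modulo p is isomorphic as an 𝔽_p-algebra to the ring of 2×2 matrices over 𝔽_p. -/
open Quaternion Matrix

/-- For an odd prime `p`, the quotient of the Hurwitz quaternions mod `p`,
i.e. the quaternion algebra over `𝔽_p`, is isomorphic as an `𝔽_p`-algebra to
`M₂(𝔽_p)`. -/
theorem quaternion_quotient_iso_matrix (p : ℕ) [Fact p.Prime] (hp : Odd p) :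
    Nonempty (ℍ[ZMod p] ≃ₐ[ZMod p] Matrix (Fin 2) (Fin 2) (ZMod p)) := by
  obtain ⟨a, b, hab⟩ := ZMod.sq_add_sq p (-1 : ZMod p)
  have hp2 : p ≠ 2 := by rintro rfl; exact (by decide : ¬ Odd 2) hp
  have h2 : (2 : ZMod p) ≠ 0 := by
    intro h
    have : (p : ℕ) ∣ 2 := by
      have := (ZMod.natCast_eq_zero_iff 2 p).mp (by exact_mod_cast h)
      exact this
    exact hp2 ((Nat.prime_dvd_prime_iff_eq Fact.out Nat.prime_two).mp this)
  have hA : a * a + b * b = -1 := by linear_combination hab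
  set I : Matrix (Fin 2) (Fin 2) (ZMod p) := !![a, b; b, -a] with hI
  set J : Matrix (Fin 2) (Fin 2) (ZMod p) := !![0, 1; -1, 0] with hJ
  set K : Matrix (Fin 2) (Fin 2) (ZMod p) := !![-b, a; a, b] with hK
  let q : QuaternionAlgebra.Basis (Matrix (Fin 2) (Fin 2) (ZMod p)) (-1 : ZMod p) 0 (-1) :=
    { i := I, j := J, k := K
      i_mul_i := by
        ext i j
        fin_cases i <;> fin_cases j <;>
          simp [hI, Matrix.mul_apply, Fin.sum_univ_two, Matrix.smul_apply, Matrix.one_apply] <;>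
          first | ring1 | linear_combination hab
      j_mul_j := by
        ext i j
        fin_cases i <;> fin_cases j <;>
          simp [hJ, Matrix.mul_apply, Fin.sum_univ_two, Matrix.smul_apply, Matrix.one_apply]
      i_mul_j := by
        ext i j
        fin_cases i <;> fin_cases j <;>
          simp [hI, hJ, hK, Matrix.mul_apply, Fin.sum_univ_two]
      j_mul_i := by
        ext i j
        fin_cases i <;> fin_cases j <;>
          simp [hI, hJ, hK, Matrix.mul_apply, Fin.sum_univ_two] }
  let f : ℍ[ZMod p] →ₐ[ZMod p] Matrix (Fin 2) (Fin 2) (ZMod p) := q.liftHom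
  have hf : ∀ x : ℍ[ZMod p],
      f x = algebraMap (ZMod p) _ x.re + x.imI • I + x.imJ • J + x.imK • K := fun x => rfl
  have hinj : Function.Injective f := by
    rw [injective_iff_map_eq_zero]
    intro x hx
    rw [hf] at hx
    have h00 := congrFun (congrFun hx 0) 0
    have h01 := congrFun (congrFun hx 0) 1
    have h10 := congrFun (congrFun hx 1) 0
    have h11 := congrFun (congrFun hx 1) 1
    simp [hI, hJ, hK, Matrix.add_apply, Matrix.smul_apply, Matrix.algebraMap_matrix_apply,
      Matrix.zero_apply] at h00 h01 h10 h11
    have hre : x.re = 0 := by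
      rcases mul_eq_zero.mp (show x.re * 2 = 0 by linear_combination h00 + h11) with h | h
      · exact h
      · exact absurd h h2
    have hJc : x.imJ = 0 := by
      rcases mul_eq_zero.mp (show x.imJ * 2 = 0 by linear_combination h01 - h10) with h | h
      · exact h
      · exact absurd h h2
    have hIc : x.imI = 0 := by
      linear_combination (-a) * h00 + (-b) * h01 + a * hre + b * hJc + x.imI * hA
    have hKc : x.imK = 0 := by
      linear_combination b * h00 + (-a) * h01 + (-b) * hre + a * hJc + x.imK * hA
    ext <;> assumption
  have hdim : Module.finrank (ZMod p) ℍ[ZMod p] =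
      Module.finrank (ZMod p) (Matrix (Fin 2) (Fin 2) (ZMod p)) := by
    rw [Quaternion.finrank_eq_four, Module.finrank_matrix]
    simp
  have hsurj : Function.Surjective f :=
    (LinearMap.injective_iff_surjective_of_finrank_eq_finrank (f := f.toLinearMap) hdim).mp hinj
  exact ⟨AlgEquiv.ofBijective f ⟨hinj, hsurj⟩⟩
end

section
/- The conjugation action of GL₂(𝔽_p) on the set of nonzero rank-one trace-zero 2×2 matrices modulo scalars is equivariantly isomorphic to the right action of GL₂(𝔽_p) on the projective line ℙ¹(𝔽_p) by row-vector multiplication, via the map sending the line spanned by a row vector v to the class of the matrix vᵀ·(v·J) where the correspondence sends ⟨x,y⟩ to the class of [[xy, y²], [−x², −xy]]. -/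
open Matrix Projectivization

/-- The matrix `[[xy, y²],[−x², −xy]]` associated to a row vector `⟨x, y⟩`. -/
def assocMatrix {p : ℕ} (v : Fin 2 → ZMod p) : Matrix (Fin 2) (Fin 2) (ZMod p) :=
  !![v 0 * v 1, (v 1) ^ 2; -(v 0) ^ 2, -(v 0 * v 1)]

section aux

variable {p : ℕ} [Fact p.Prime]

lemma vec_ne_zero_iff (v : Fin 2 → ZMod p) : v ≠ 0 ↔ v 0 ≠ 0 ∨ v 1 ≠ 0 := by
  constructor
  · intro h
    by_contra hc
    push_neg at hc
    exact h (funext fun i => by fin_cases i <;> simp [hc.1, hc.2])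
  · rintro (h | h) hc <;> simp [hc] at h

lemma assoc_ne_zero (v : Fin 2 → ZMod p) (hv : v ≠ 0) : assocMatrix v ≠ 0 := by
  rcases (vec_ne_zero_iff v).mp hv with h | h
  · intro hc
    have := congrFun (congrFun hc 1) 0
    simp [assocMatrix] at this
    exact h this
  · intro hc
    have := congrFun (congrFun hc 0) 1
    simp [assocMatrix] at this
    exact h this

lemma assoc_smul (c : ZMod p) (v : Fin 2 → ZMod p) :
    assocMatrix (c • v) = (c ^ 2) • assocMatrix v := by
  ext i j
  fin_cases i <;> fin_cases j <;>
    simp [assocMatrix, Matrix.smul_apply, smul_eq_mul] <;> ring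

lemma mk_assoc_congr (v w : Fin 2 → ZMod p) (hv : v ≠ 0) (hw : w ≠ 0)
    (h : Projectivization.mk (ZMod p) v hv = Projectivization.mk (ZMod p) w hw) :
    Projectivization.mk (ZMod p) (assocMatrix v) (assoc_ne_zero v hv) =
      Projectivization.mk (ZMod p) (assocMatrix w) (assoc_ne_zero w hw) := by
  rw [mk_eq_mk_iff] at h
  obtain ⟨a, ha⟩ := h
  rw [mk_eq_mk_iff']
  refine ⟨(a : ZMod p) ^ 2, ?_⟩
  rw [← ha, Units.smul_def, assoc_smul]

lemma assoc_trace (v : Fin 2 → ZMod p) : (assocMatrix v).trace = 0 := by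
  simp [assocMatrix, Matrix.trace_fin_two]

lemma assoc_det (v : Fin 2 → ZMod p) : (assocMatrix v).det = 0 := by
  simp [assocMatrix, Matrix.det_fin_two_of]
  ring

lemma conj_identity (B : Matrix (Fin 2) (Fin 2) (ZMod p)) (v : Fin 2 → ZMod p) :
    B * assocMatrix (Matrix.vecMul v B) = B.det • (assocMatrix v * B) := by
  ext i j
  fin_cases i <;> fin_cases j <;>
    simp [assocMatrix, Matrix.mul_apply, Matrix.vecMul, Matrix.det_fin_two,
      Fin.sum_univ_two, dotProduct, Matrix.smul_apply, smul_eq_mul] <;> ring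

end aux

/-- The conjugation action of `GL₂(𝔽_p)` on the set `D` of nonzero trace-zero
determinant-zero `2×2` matrices modulo scalars is equivariantly isomorphic to the
right action of `GL₂(𝔽_p)` on `ℙ¹(𝔽_p)` by row-vector multiplication, via
`⟨x,y⟩ ↦ [[xy, y²],[−x², −xy]]`. -/
theorem metacommutation_equivariant_iso (p : ℕ) [Fact p.Prime] (hp : Odd p) :
    ∃ f : Projectivization (ZMod p) (Fin 2 → ZMod p) →
          Projectivization (ZMod p) (Matrix (Fin 2) (Fin 2) (ZMod p)),
      Function.Injective f ∧
      Set.range f = {Q : Projectivization (ZMod p) (Matrix (Fin 2) (Fin 2) (ZMod p)) |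
        Q.rep.trace = 0 ∧ Q.rep.det = 0} ∧
      (∀ (v : Fin 2 → ZMod p) (hv : v ≠ 0) (hM : assocMatrix v ≠ 0),
        f (Projectivization.mk (ZMod p) v hv) =
          Projectivization.mk (ZMod p) (assocMatrix v) hM) ∧
      (∀ (A : GL (Fin 2) (ZMod p)) (v : Fin 2 → ZMod p) (hv : v ≠ 0)
        (hv' : Matrix.vecMul v (↑A : Matrix (Fin 2) (Fin 2) (ZMod p)) ≠ 0)
        (hM : (↑(A⁻¹) : Matrix (Fin 2) (Fin 2) (ZMod p)) * assocMatrix v * (↑A : Matrix (Fin 2) (Fin 2) (ZMod p)) ≠ 0),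
        f (Projectivization.mk (ZMod p) (Matrix.vecMul v ↑A) hv') =
          Projectivization.mk (ZMod p)
            ((↑(A⁻¹) : Matrix (Fin 2) (Fin 2) (ZMod p)) * assocMatrix v * (↑A : Matrix (Fin 2) (Fin 2) (ZMod p))) hM) := by
  classical
  set f : Projectivization (ZMod p) (Fin 2 → ZMod p) →
      Projectivization (ZMod p) (Matrix (Fin 2) (Fin 2) (ZMod p)) :=
    fun P => Projectivization.mk (ZMod p) (assocMatrix P.rep)
      (assoc_ne_zero P.rep P.rep_nonzero) with hf
  have f_mk : ∀ (v : Fin 2 → ZMod p) (hv : v ≠ 0),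
      f (Projectivization.mk (ZMod p) v hv) =
        Projectivization.mk (ZMod p) (assocMatrix v) (assoc_ne_zero v hv) := by
    intro v hv
    exact mk_assoc_congr _ _ _ _ (Projectivization.mk_rep _)
  refine ⟨f, ?_, ?_, ?_, ?_⟩
  · -- injectivity
    intro P Q h
    induction P using Projectivization.ind with | h v hv =>
    induction Q using Projectivization.ind with | h w hw =>
    rw [f_mk v hv, f_mk w hw, mk_eq_mk_iff] at h
    obtain ⟨c, hc⟩ := h
    have e00 : v 0 * v 1 = (c : ZMod p) * (w 0 * w 1) := by
      have := congrFun (congrFun hc 0) 0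
      simpa [assocMatrix, Matrix.smul_apply, Units.smul_def, smul_eq_mul] using this.symm
    have e01 : v 1 ^ 2 = (c : ZMod p) * w 1 ^ 2 := by
      have := congrFun (congrFun hc 0) 1
      simpa [assocMatrix, Matrix.smul_apply, Units.smul_def, smul_eq_mul] using this.symm
    have e10 : v 0 ^ 2 = (c : ZMod p) * w 0 ^ 2 := by
      have := congrFun (congrFun hc 1) 0
      have h' : -(v 0 ^ 2) = (c : ZMod p) * -(w 0 ^ 2) := by
        simpa [assocMatrix, Matrix.smul_apply, Units.smul_def, smul_eq_mul] using this.symm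
      linear_combination -h'
    have hcne : (c : ZMod p) ≠ 0 := c.ne_zero
    rw [mk_eq_mk_iff']
    by_cases hx' : w 0 = 0
    · have hy' : w 1 ≠ 0 := by
        rcases (vec_ne_zero_iff w).mp hw with h | h
        · exact absurd hx' h
        · exact h
      have hx : v 0 = 0 := by
        have : v 0 ^ 2 = 0 := by rw [e10, hx']; ring
        exact pow_eq_zero_iff (n := 2) (by norm_num) |>.mp this
      refine ⟨v 1 / w 1, ?_⟩
      have h2 : ∀ i : Fin 2, ((v 1 / w 1) • w) i = v i := by
        rw [Fin.forall_fin_two]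
        constructor
        · simp [Pi.smul_apply, smul_eq_mul, hx, hx']
        · simp only [Pi.smul_apply, smul_eq_mul]
          field_simp
      exact funext h2
    · have hx : v 0 ≠ 0 := by
        intro hx
        apply hx'
        have : (c : ZMod p) * w 0 ^ 2 = 0 := by rw [← e10, hx]; ring
        have := (mul_eq_zero.mp this).resolve_left hcne
        exact pow_eq_zero_iff (n := 2) (by norm_num) |>.mp this
      have key : v 0 * (v 0 * w 1 - w 0 * v 1) = 0 := by
        linear_combination w 1 * e10 - w 0 * e00
      have key' : v 0 * w 1 = w 0 * v 1 := by
        have := (mul_eq_zero.mp key).resolve_left hx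
        linear_combination this
      refine ⟨v 0 / w 0, ?_⟩
      have h2 : ∀ i : Fin 2, ((v 0 / w 0) • w) i = v i := by
        rw [Fin.forall_fin_two]
        constructor
        · simp only [Pi.smul_apply, smul_eq_mul]
          field_simp
        · simp only [Pi.smul_apply, smul_eq_mul]
          field_simp
          first
            | linear_combination key'
            | linear_combination -key'
            | linear_combination 2 * key'
            | linear_combination -2 * key'
      exact funext h2
  · -- range
    ext Q
    simp only [Set.mem_range, Set.mem_setOf_eq]
    constructor
    · rintro ⟨P, rfl⟩
      have : Projectivization.mk (ZMod p) (f P).rep (f P).rep_nonzero =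
          Projectivization.mk (ZMod p) (assocMatrix P.rep)
            (assoc_ne_zero P.rep P.rep_nonzero) := by
        rw [Projectivization.mk_rep]
      rw [mk_eq_mk_iff] at this
      obtain ⟨a, ha⟩ := this
      constructor
      · rw [← ha, Units.smul_def, Matrix.trace_smul, assoc_trace, smul_zero]
      · rw [← ha, Units.smul_def, Matrix.det_smul, assoc_det, mul_zero]
    · rintro ⟨htr, hdet⟩
      set M := Q.rep with hM
      have hMne : M ≠ 0 := Q.rep_nonzero
      rw [Matrix.trace_fin_two] at htr
      rw [Matrix.det_fin_two] at hdet
      by_cases hb : M 0 1 ≠ 0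
      · set v : Fin 2 → ZMod p := ![M 0 0, M 0 1] with hv'
        have hv : v ≠ 0 := by
          rw [vec_ne_zero_iff]
          right
          simpa [hv'] using hb
        refine ⟨Projectivization.mk (ZMod p) v hv, ?_⟩
        rw [f_mk v hv]
        conv_rhs => rw [← Projectivization.mk_rep Q]
        rw [mk_eq_mk_iff']
        refine ⟨M 0 1, ?_⟩
        rw [← Matrix.ext_iff]
        simp only [assocMatrix, hv', Fin.forall_fin_two, Matrix.smul_apply, smul_eq_mul,
          Matrix.cons_val_zero, Matrix.cons_val_one, Matrix.head_cons, Matrix.of_apply,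
          Matrix.cons_val', Matrix.empty_val', Matrix.cons_val_fin_one,
          Matrix.head_fin_const, ← hM]
        refine ⟨⟨by ring, by ring⟩, ?_, ?_⟩
        · linear_combination M 0 0 * htr - hdet
        · linear_combination (M 0 1) * htr
      · push_neg at hb
        have ha : M 0 0 = 0 := by
          have h2 : M 0 0 ^ 2 = 0 := by
            linear_combination (M 0 0) * htr - hdet - M 1 0 * hb
          exact pow_eq_zero_iff (n := 2) (by norm_num) |>.mp h2
        have hd : M 1 1 = 0 := by linear_combination htr - ha
        have hc : M 1 0 ≠ 0 := by
          intro hc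
          apply hMne
          ext i j
          fin_cases i <;> fin_cases j <;> simp [ha, hb, hc, hd, ← hM]
        set v : Fin 2 → ZMod p := ![1, 0] with hv'
        have hv : v ≠ 0 := by
          rw [vec_ne_zero_iff]; left; simp [hv']
        refine ⟨Projectivization.mk (ZMod p) v hv, ?_⟩
        rw [f_mk v hv]
        conv_rhs => rw [← Projectivization.mk_rep Q]
        rw [mk_eq_mk_iff']
        refine ⟨-(M 1 0)⁻¹, ?_⟩
        rw [← Matrix.ext_iff]
        simp only [assocMatrix, hv', Fin.forall_fin_two, Matrix.smul_apply, smul_eq_mul,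
          Matrix.cons_val_zero, Matrix.cons_val_one, Matrix.head_cons, Matrix.of_apply,
          Matrix.cons_val', Matrix.empty_val', Matrix.cons_val_fin_one,
          Matrix.head_fin_const, ← hM, ha, hb, hd]
        refine ⟨⟨by ring, by ring⟩, ?_, by ring⟩
        field_simp
  · -- f_mk
    intro v hv hM
    exact f_mk v hv
  · -- equivariance
    intro A v hv hv' hM
    have hBdet : IsUnit ((↑A : Matrix (Fin 2) (Fin 2) (ZMod p)).det) :=
      (Matrix.isUnit_iff_isUnit_det _).mp ⟨A, rfl⟩
    have key : assocMatrix (Matrix.vecMul v (↑A : Matrix (Fin 2) (Fin 2) (ZMod p))) =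
        (↑A : Matrix (Fin 2) (Fin 2) (ZMod p)).det •
          ((↑A : Matrix (Fin 2) (Fin 2) (ZMod p))⁻¹ * assocMatrix v *
            (↑A : Matrix (Fin 2) (Fin 2) (ZMod p))) := by
      set B : Matrix (Fin 2) (Fin 2) (ZMod p) := ↑A with hB
      have h1 := conj_identity B v
      calc assocMatrix (Matrix.vecMul v B)
          = B⁻¹ * (B * assocMatrix (Matrix.vecMul v B)) := by
            rw [← Matrix.mul_assoc, Matrix.nonsing_inv_mul B hBdet, Matrix.one_mul]
        _ = B⁻¹ * (B.det • (assocMatrix v * B)) := by rw [h1]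
        _ = B.det • (B⁻¹ * assocMatrix v * B) := by
            rw [Matrix.mul_smul, Matrix.mul_assoc]
    rw [← Matrix.coe_units_inv] at key
    rw [f_mk _ hv', mk_eq_mk_iff']
    exact ⟨(↑A : Matrix (Fin 2) (Fin 2) (ZMod p)).det, key.symm⟩
end

section
/- For p an odd prime and A ∈ GL₂(𝔽_p), the sign of the permutation of ℙ¹(𝔽_p) induced by the standard action of A equals the Legendre symbol (det A / p), i.e., it is +1 if det A is a square in 𝔽_p^× and −1 otherwise. -/
open Matrix

namespace SignLegendreAux

variable {p : ℕ} [Fact p.Prime]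

local notation "K" => ZMod p
local notation "P1" => Projectivization (ZMod p) (Fin 2 → ZMod p)

lemma vecMul_cancel (A : GL (Fin 2) (ZMod p)) (v : Fin 2 → K) :
    (v ᵥ* (A : Matrix (Fin 2) (Fin 2) K)) ᵥ* ((A⁻¹ : GL (Fin 2) (ZMod p)) : Matrix (Fin 2) (Fin 2) K) = v := by
  rw [Matrix.vecMul_vecMul, ← Units.val_mul, mul_inv_cancel, Units.val_one, Matrix.vecMul_one]

lemma vecMul_inj (A : GL (Fin 2) (ZMod p)) :
    Function.Injective ((A : Matrix (Fin 2) (Fin 2) K).vecMulLinear) := by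
  intro v w h
  simp only [Matrix.vecMulLinear_apply] at h
  have h2 := congrArg
    (fun u : Fin 2 → K => u ᵥ* ((A⁻¹ : GL (Fin 2) (ZMod p)) : Matrix (Fin 2) (Fin 2) K)) h
  simpa only [vecMul_cancel] using h2

lemma vecMul_ne_zero (A : GL (Fin 2) (ZMod p)) {v : Fin 2 → K} (hv : v ≠ 0) :
    v ᵥ* (A : Matrix (Fin 2) (Fin 2) K) ≠ 0 := fun h =>
  hv (vecMul_inj A (by simp only [Matrix.vecMulLinear_apply, Matrix.zero_vecMul]; exact h))

lemma mk_eq_mk_of_eq {v w : Fin 2 → K} (hv : v ≠ 0) (hw : w ≠ 0) (h : v = w) :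
    Projectivization.mk (ZMod p) v hv = Projectivization.mk (ZMod p) w hw := by subst h; rfl

/-- The permutation of `ℙ¹` induced by `A` (acting by `vecMul` on the right). -/
noncomputable def pi (A : GL (Fin 2) (ZMod p)) : Equiv.Perm P1 where
  toFun := Projectivization.map ((A : Matrix (Fin 2) (Fin 2) K).vecMulLinear) (vecMul_inj A)
  invFun := Projectivization.map
    (((A⁻¹ : GL (Fin 2) (ZMod p)) : Matrix (Fin 2) (Fin 2) K).vecMulLinear) (vecMul_inj A⁻¹)
  left_inv := by
    intro x
    induction x using Projectivization.ind with
    | h v hv =>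
      rw [Projectivization.map_mk, Projectivization.map_mk]
      refine mk_eq_mk_of_eq _ _ ?_
      simp only [Matrix.vecMulLinear_apply]
      exact vecMul_cancel A v
  right_inv := by
    intro x
    induction x using Projectivization.ind with
    | h v hv =>
      rw [Projectivization.map_mk, Projectivization.map_mk]
      refine mk_eq_mk_of_eq _ _ ?_
      simp only [Matrix.vecMulLinear_apply]
      rw [Matrix.vecMul_vecMul, ← Units.val_mul, inv_mul_cancel, Units.val_one, Matrix.vecMul_one]

lemma pi_mk (A : GL (Fin 2) (ZMod p)) (v : Fin 2 → K) (hv : v ≠ 0) :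
    pi A (Projectivization.mk (ZMod p) v hv) =
      Projectivization.mk (ZMod p) (v ᵥ* (A : Matrix (Fin 2) (Fin 2) K)) (vecMul_ne_zero A hv) :=
  Projectivization.map_mk _ (vecMul_inj A) v hv

lemma pi_one : pi (p := p) 1 = 1 := by
  ext x
  induction x using Projectivization.ind with
  | h v hv =>
    rw [Equiv.Perm.coe_one, id_eq, pi_mk]
    exact mk_eq_mk_of_eq _ _ (by simp)

lemma pi_mul (A B : GL (Fin 2) (ZMod p)) : pi (A * B) = pi B * pi A := by
  ext x
  induction x using Projectivization.ind with
  | h v hv =>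
    rw [pi_mk, Equiv.Perm.mul_apply, pi_mk, pi_mk]
    exact mk_eq_mk_of_eq _ _ (by rw [Units.val_mul, Matrix.vecMul_vecMul])

lemma pi_pow (A : GL (Fin 2) (ZMod p)) (n : ℕ) : pi (A ^ n) = (pi A) ^ n := by
  induction n with
  | zero => simpa using pi_one
  | succ n ih => rw [pow_succ, pi_mul, ih, pow_succ']


section Sign

/-- Sign of the induced permutation. -/
noncomputable def F [DecidableEq P1] [Fintype P1] (A : GL (Fin 2) (ZMod p)) : ℤˣ :=
  Equiv.Perm.sign (pi A)

lemma F_one [DecidableEq P1] [Fintype P1] : F (p := p) 1 = 1 := by rw [F, pi_one, _root_.map_one]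

lemma F_mul [DecidableEq P1] [Fintype P1] (A B : GL (Fin 2) (ZMod p)) : F (A * B) = F A * F B := by
  rw [F, pi_mul, _root_.map_mul, F, F, mul_comm]

lemma F_pow [DecidableEq P1] [Fintype P1] (A : GL (Fin 2) (ZMod p)) (n : ℕ) : F (A ^ n) = F A ^ n := by
  rw [F, pi_pow, _root_.map_pow, F]

lemma transvection_pow {i j : Fin 2} (hij : i ≠ j) (c : K) (n : ℕ) :
    transvection i j c ^ n = transvection i j ((n : K) * c) := by
  induction n with
  | zero => simp [transvection_zero]
  | succ n ih =>
    rw [pow_succ, ih, transvection_mul_transvection_same _ _ hij]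
    congr 1
    push_cast
    ring

lemma F_eq_one_of_pow_odd_eq_one {x : ℤˣ} (hp : Odd p) (h : x ^ p = 1) : x = 1 := by
  rcases Int.units_eq_one_or x with h1 | h1
  · exact h1
  · rw [h1, hp.neg_one_pow] at h
    exact absurd h (by decide)

lemma F_transvection [DecidableEq P1] [Fintype P1] (hp : Odd p) (t : TransvectionStruct (Fin 2) (ZMod p))
    (u : GL (Fin 2) (ZMod p)) (hu : (u : Matrix (Fin 2) (Fin 2) K) = t.toMatrix) :
    F u = 1 := by
  have hup : u ^ p = 1 := by
    ext
    rw [Units.val_pow_eq_pow_val, hu, TransvectionStruct.toMatrix,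
      transvection_pow t.hij, ZMod.natCast_self, zero_mul, transvection_zero, Units.val_one]
  exact F_eq_one_of_pow_odd_eq_one hp (by rw [← F_pow, hup, F_one])

lemma F_transvection_list [DecidableEq P1] [Fintype P1] (hp : Odd p) (L : List (TransvectionStruct (Fin 2) (ZMod p)))
    (u : GL (Fin 2) (ZMod p))
    (hu : (u : Matrix (Fin 2) (Fin 2) K) = (L.map TransvectionStruct.toMatrix).prod) :
    F u = 1 := by
  induction L generalizing u with
  | nil =>
    have : u = 1 := Units.ext (by simpa using hu)
    rw [this, F_one]
  | cons t L ih =>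
    have hdet : IsUnit (t.toMatrix : Matrix (Fin 2) (Fin 2) K) :=
      (Matrix.isUnit_iff_isUnit_det _).mpr (by simp)
    obtain ⟨w, hw⟩ := hdet
    have h2 : ((w⁻¹ * u : GL (Fin 2) (ZMod p)) : Matrix (Fin 2) (Fin 2) K) =
        (L.map TransvectionStruct.toMatrix).prod := by
      rw [Units.val_mul, hu, List.map_cons, List.prod_cons, ← hw, ← mul_assoc,
        Units.inv_mul, one_mul]
    calc F u = F (w * (w⁻¹ * u)) := by rw [mul_inv_cancel_left]
    _ = F w * F (w⁻¹ * u) := F_mul _ _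
    _ = 1 := by rw [F_transvection hp t w hw, ih _ h2, one_mul]

end Sign

/-! ### Diagonal matrices -/

lemma vec2_ext {v w : Fin 2 → K} (h0 : v 0 = w 0) (h1 : v 1 = w 1) : v = w := by
  funext i
  fin_cases i
  · exact h0
  · exact h1

lemma diag2_mul (a b a' b' : K) :
    diagonal ![a, b] * diagonal ![a', b'] = diagonal ![a * a', b * b'] := by
  have h : (fun i => ![a, b] i * ![a', b'] i) = ![a * a', b * b'] := vec2_ext rfl rfl
  rw [Matrix.diagonal_mul_diagonal, h]

lemma diag2_one : diagonal ![(1 : K), 1] = (1 : Matrix (Fin 2) (Fin 2) K) := by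
  have h : ![(1 : K), 1] = (1 : Fin 2 → K) := vec2_ext rfl rfl
  rw [h]
  exact Matrix.diagonal_one

lemma vecMul_diag2 (v : Fin 2 → K) (a b : K) :
    v ᵥ* diagonal ![a, b] = ![v 0 * a, v 1 * b] := by
  refine vec2_ext ?_ ?_
  · rw [Matrix.vecMul_diagonal]
    simp only [Matrix.cons_val_zero]
  · rw [Matrix.vecMul_diagonal]
    simp only [Matrix.cons_val_one, Matrix.head_cons, Matrix.cons_val_zero]

/-- `diag(c, 1)` as an element of `GL₂`. -/
def dmat (c : (ZMod p)ˣ) : GL (Fin 2) (ZMod p) where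
  val := diagonal ![(c : K), 1]
  inv := diagonal ![((c⁻¹ : (ZMod p)ˣ) : K), 1]
  val_inv := by rw [diag2_mul, Units.mul_inv, one_mul, diag2_one]
  inv_val := by rw [diag2_mul, Units.inv_mul, one_mul, diag2_one]

/-- `diag(d, d)` as an element of `GL₂`. -/
def smat (d : (ZMod p)ˣ) : GL (Fin 2) (ZMod p) where
  val := diagonal ![(d : K), (d : K)]
  inv := diagonal ![((d⁻¹ : (ZMod p)ˣ) : K), ((d⁻¹ : (ZMod p)ˣ) : K)]
  val_inv := by rw [diag2_mul, Units.mul_inv, diag2_one]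
  inv_val := by rw [diag2_mul, Units.inv_mul, diag2_one]

lemma dmat_mul (c d : (ZMod p)ˣ) : dmat c * dmat d = dmat (c * d) := by
  ext : 1
  show diagonal ![(c : K), 1] * diagonal ![(d : K), 1] = diagonal ![((c * d : (ZMod p)ˣ) : K), 1]
  rw [diag2_mul, one_mul, Units.val_mul]

lemma dmat_one : dmat (p := p) 1 = 1 := by
  ext : 1
  show diagonal ![((1 : (ZMod p)ˣ) : K), 1] = (1 : Matrix (Fin 2) (Fin 2) K)
  rw [Units.val_one, diag2_one]

lemma dmat_pow (c : (ZMod p)ˣ) (n : ℕ) : dmat c ^ n = dmat (c ^ n) := by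
  induction n with
  | zero => rw [pow_zero, pow_zero, dmat_one]
  | succ n ih => rw [pow_succ, ih, dmat_mul, ← pow_succ]

/-! ### Points of `ℙ¹` -/

lemma pt_ne_zero (x : K) : ![x, (1 : K)] ≠ 0 := by
  intro h
  have h1 : (1 : K) = 0 := congrFun h 1
  exact one_ne_zero h1

/-- The affine point `[x : 1]` of `ℙ¹`. -/
def pt (x : K) : P1 := Projectivization.mk (ZMod p) ![x, 1] (pt_ne_zero x)

lemma pt_inj {x y : K} (h : pt x = pt y) : x = y := by
  rw [pt, pt, Projectivization.mk_eq_mk_iff] at h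
  obtain ⟨a, ha⟩ := h
  have h1 := congrFun ha 1
  have h0 := congrFun ha 0
  simp only [Pi.smul_apply, Units.smul_def, smul_eq_mul, Matrix.cons_val_one, Matrix.head_cons,
    Matrix.cons_val_zero, mul_one] at h1
  simp only [Pi.smul_apply, Units.smul_def, smul_eq_mul, Matrix.cons_val_zero, h1, one_mul] at h0
  exact h0.symm

lemma pi_dmat_pt (c : (ZMod p)ˣ) (x : K) : pi (dmat c) (pt x) = pt (x * (c : K)) := by
  rw [pt, pi_mk, pt]
  refine mk_eq_mk_of_eq _ _ ?_
  show ![x, (1 : K)] ᵥ* diagonal ![(c : K), 1] = ![x * (c : K), 1]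
  rw [vecMul_diag2]
  exact vec2_ext rfl (one_mul 1)

lemma pi_dmat_fix (c : (ZMod p)ˣ) {v : Fin 2 → K} (hv : v ≠ 0) (h1 : v 1 = 0) :
    pi (dmat c) (Projectivization.mk (ZMod p) v hv) = Projectivization.mk (ZMod p) v hv := by
  rw [pi_mk, Projectivization.mk_eq_mk_iff]
  refine ⟨c, ?_⟩
  show c • v = v ᵥ* diagonal ![(c : K), 1]
  rw [vecMul_diag2]
  refine vec2_ext ?_ ?_
  · simp only [Pi.smul_apply, Units.smul_def, smul_eq_mul, Matrix.cons_val_zero]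
    rw [mul_comm]
  · simp only [Pi.smul_apply, Units.smul_def, smul_eq_mul, Matrix.cons_val_one, Matrix.head_cons,
      Matrix.cons_val_zero, h1, mul_zero, zero_mul]

lemma mk_eq_pt {v : Fin 2 → K} (hv : v ≠ 0) (h1 : v 1 ≠ 0) :
    Projectivization.mk (ZMod p) v hv = pt (v 0 * (v 1)⁻¹) := by
  rw [pt, Projectivization.mk_eq_mk_iff]
  refine ⟨Units.mk0 (v 1) h1, ?_⟩
  refine vec2_ext ?_ ?_
  · show (v 1) * (v 0 * (v 1)⁻¹) = v 0
    rw [mul_comm (v 0) (v 1)⁻¹, ← mul_assoc, mul_inv_cancel₀ h1, one_mul]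
  · show (v 1) * 1 = v 1
    rw [mul_one]

lemma pi_dmat_iter (c : (ZMod p)ˣ) (k : ℕ) :
    ((pi (dmat c)) ^ k) (pt 1) = pt ((c : K) ^ k) := by
  induction k with
  | zero => simp only [pow_zero, Equiv.Perm.coe_one, id_eq]
  | succ k ih =>
    rw [pow_succ', Equiv.Perm.mul_apply, ih, pi_dmat_pt, ← pow_succ]

/-! ### The generator computation -/

lemma orderOf_gen (g : (ZMod p)ˣ) (hg : ∀ x : (ZMod p)ˣ, x ∈ Subgroup.zpowers g) :
    orderOf g = p - 1 := by
  rw [orderOf_eq_card_of_forall_mem_zpowers hg, Nat.card_eq_fintype_card, ZMod.card_units]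

lemma mem_pows (g x : (ZMod p)ˣ) (hg : ∀ y : (ZMod p)ˣ, y ∈ Subgroup.zpowers g) :
    ∃ k : ℕ, g ^ k = x :=
  (isOfFinOrder_of_finite g).mem_powers_iff_mem_zpowers.mpr (hg x)

lemma p_ge_three (hp : Odd p) : 3 ≤ p := by
  have h2 : 2 ≤ p := (Fact.out : p.Prime).two_le
  rcases Nat.lt_or_ge p 3 with h | h
  · interval_cases p
    · exact absurd hp (by decide)
  · exact h
  
lemma even_card_units (hp : Odd p) : Even (p - 1) := Nat.Odd.sub_odd hp odd_one

lemma isSquare_gen_pow_iff (hp : Odd p) (g : (ZMod p)ˣ)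
    (hg : ∀ x : (ZMod p)ˣ, x ∈ Subgroup.zpowers g) (k : ℕ) :
    IsSquare (g ^ k) ↔ Even k := by
  constructor
  · rintro ⟨h, hh⟩
    obtain ⟨m, hm⟩ := mem_pows g h hg
    rw [← hm, ← pow_add] at hh
    have hmod : k ≡ m + m [MOD orderOf g] := pow_eq_pow_iff_modEq.mp hh
    have h2 : (2 : ℕ) ∣ orderOf g := by
      rw [orderOf_gen g hg]
      exact (even_card_units hp).two_dvd
    have hmod2 : k ≡ m + m [MOD 2] := hmod.of_dvd h2
    have : k % 2 = (m + m) % 2 := hmod2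
    rw [Nat.even_iff, this]
    omega
  · rintro ⟨m, hm⟩
    exact ⟨g ^ m, by rw [← pow_add, hm]⟩

lemma F_dmat_gen [DecidableEq P1] [Fintype P1] (hp : Odd p) (g : (ZMod p)ˣ)
    (hg : ∀ x : (ZMod p)ˣ, x ∈ Subgroup.zpowers g) : F (dmat g) = -1 := by
  have hcard : orderOf g = p - 1 := orderOf_gen g hg
  have hp3 : 3 ≤ p := p_ge_three hp
  set μ := pi (dmat g) with hμ
  have hdvd : ∀ k : ℕ, μ ^ k = 1 → (p - 1) ∣ k := by
    intro k hk
    have h1 : (μ ^ k) (pt 1) = pt 1 := by rw [hk]; rfl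
    rw [hμ, pi_dmat_iter] at h1
    have h2 : (g : K) ^ k = 1 := pt_inj h1
    have h3 : g ^ k = 1 := Units.ext (by rw [Units.val_pow_eq_pow_val, h2, Units.val_one])
    rw [← hcard]
    exact orderOf_dvd_of_pow_eq_one h3
  have hμord : orderOf μ = p - 1 := by
    apply Nat.dvd_antisymm
    · apply orderOf_dvd_of_pow_eq_one
      rw [hμ, ← pi_pow, dmat_pow, ← hcard, pow_orderOf_eq_one, dmat_one, pi_one]
    · exact hdvd _ (pow_orderOf_eq_one μ)
  have hg1 : g ≠ 1 := by
    intro h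
    rw [h, orderOf_one] at hcard
    omega
  have hcyc : μ.IsCycle := by
    refine ⟨pt 1, ?_, ?_⟩
    · rw [hμ, pi_dmat_pt, one_mul]
      intro h
      exact hg1 (Units.ext (by rw [pt_inj h, Units.val_one]))
    · intro y hy
      induction y using Projectivization.ind with
      | h v hv =>
        by_cases h1 : v 1 = 0
        · exact absurd (pi_dmat_fix g hv h1) hy
        · have hy' : Projectivization.mk (ZMod p) v hv = pt (v 0 * (v 1)⁻¹) := mk_eq_pt hv h1
          by_cases h0 : v 0 = 0
          · exfalso
            apply hy
            rw [hy', h0, zero_mul, hμ, pi_dmat_pt, zero_mul]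
          · have hc : v 0 * (v 1)⁻¹ ≠ 0 := mul_ne_zero h0 (inv_ne_zero h1)
            obtain ⟨k, hk⟩ := mem_pows g (Units.mk0 _ hc) hg
            refine ⟨(k : ℤ), ?_⟩
            rw [zpow_natCast, hμ, pi_dmat_iter, hy']
            congr 1
            calc (g : K) ^ k = ((g ^ k : (ZMod p)ˣ) : K) := by
                  rw [Units.val_pow_eq_pow_val]
            _ = v 0 * (v 1)⁻¹ := by rw [hk]; rfl
  have hsign : Equiv.Perm.sign μ = -(-1) ^ μ.support.card := hcyc.sign
  rw [F, ← hμ, hsign, ← hcyc.orderOf, hμord, (even_card_units hp).neg_one_pow]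

/-! ### Scalar matrices act trivially -/

lemma pi_smat (d : (ZMod p)ˣ) : pi (smat d) = 1 := by
  ext x
  induction x using Projectivization.ind with
  | h v hv =>
    rw [pi_mk, Equiv.Perm.coe_one, id_eq, Projectivization.mk_eq_mk_iff]
    refine ⟨d, ?_⟩
    show d • v = v ᵥ* diagonal ![(d : K), (d : K)]
    rw [vecMul_diag2]
    refine vec2_ext ?_ ?_
    · simp only [Pi.smul_apply, Units.smul_def, smul_eq_mul, Matrix.cons_val_zero]
      rw [mul_comm]
    · simp only [Pi.smul_apply, Units.smul_def, smul_eq_mul, Matrix.cons_val_one,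
        Matrix.head_cons, Matrix.cons_val_zero]
      rw [mul_comm]

lemma F_smat [DecidableEq P1] [Fintype P1] (d : (ZMod p)ˣ) : F (smat d) = 1 := by
  rw [F, pi_smat, _root_.map_one]

/-! ### Squares -/

lemma isSquare_coe_iff (u : (ZMod p)ˣ) : IsSquare ((u : K)) ↔ IsSquare u := by
  constructor
  · rintro ⟨r, hr⟩
    have hr0 : r ≠ 0 := by
      rintro rfl
      rw [mul_zero] at hr
      exact u.ne_zero hr
    exact ⟨Units.mk0 r hr0, Units.ext (by rw [hr, Units.val_mul]; rfl)⟩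
  · rintro ⟨r, hr⟩
    exact ⟨(r : K), by rw [hr, Units.val_mul]⟩

lemma isSquare_mul_mul_iff (a b : (ZMod p)ˣ) : IsSquare (a * (b * b)) ↔ IsSquare a := by
  constructor
  · intro h
    have e : a = (a * (b * b)) * (b⁻¹ * b⁻¹) := by group
    rw [e]
    exact h.mul ⟨b⁻¹, rfl⟩
  · intro h
    exact h.mul ⟨b, rfl⟩

lemma F_dmat_chi [DecidableEq P1] [Fintype P1] (hp : Odd p) (g : (ZMod p)ˣ)
    (hg : ∀ x : (ZMod p)ˣ, x ∈ Subgroup.zpowers g) (c : (ZMod p)ˣ) :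
    F (dmat c) = if IsSquare c then 1 else -1 := by
  obtain ⟨k, hk⟩ := mem_pows g c hg
  subst hk
  rw [← dmat_pow, F_pow, F_dmat_gen hp g hg]
  by_cases he : Even k
  · rw [if_pos ((isSquare_gen_pow_iff hp g hg k).mpr he), he.neg_one_pow]
  · rw [if_neg (fun hsq => he ((isSquare_gen_pow_iff hp g hg k).mp hsq)),
      (Nat.not_even_iff_odd.mp he).neg_one_pow]

/-! ### Main computation -/

lemma F_eq_chi [DecidableEq P1] [Fintype P1] (hp : Odd p) (u : GL (Fin 2) (ZMod p)) :
    F u = if IsSquare ((u : Matrix (Fin 2) (Fin 2) K).det) then 1 else -1 := by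
  obtain ⟨g, hg⟩ := IsCyclic.exists_generator (α := (ZMod p)ˣ)
  obtain ⟨L, L', D, hdec⟩ :=
    Matrix.Pivot.exists_list_transvec_mul_diagonal_mul_list_transvec (↑u : Matrix (Fin 2) (Fin 2) K)
  have hL : IsUnit ((L.map TransvectionStruct.toMatrix).prod) := by
    rw [Matrix.isUnit_iff_isUnit_det, TransvectionStruct.det_toMatrix_prod]
    exact isUnit_one
  have hL' : IsUnit ((L'.map TransvectionStruct.toMatrix).prod) := by
    rw [Matrix.isUnit_iff_isUnit_det, TransvectionStruct.det_toMatrix_prod]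
    exact isUnit_one
  obtain ⟨w, hw⟩ := hL
  obtain ⟨w', hw'⟩ := hL'
  have hdetD : (diagonal D).det = (↑u : Matrix (Fin 2) (Fin 2) K).det := by
    rw [hdec, Matrix.det_mul, Matrix.det_mul, TransvectionStruct.det_toMatrix_prod,
      TransvectionStruct.det_toMatrix_prod, one_mul, mul_one]
  have hDu : IsUnit (diagonal D) := by
    rw [Matrix.isUnit_iff_isUnit_det, hdetD]
    exact (Matrix.isUnit_iff_isUnit_det _).mp u.isUnit
  obtain ⟨d, hd⟩ := hDu
  have hu2 : u = w * d * w' := by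
    apply Units.ext
    rw [Units.val_mul, Units.val_mul, hw, hd, hw', ← hdec]
  have hDdet0 : D 0 * D 1 ≠ 0 := by
    have hIU : IsUnit (diagonal D).det := (Matrix.isUnit_iff_isUnit_det _).mp ⟨d, hd⟩
    rw [Matrix.det_diagonal, Fin.prod_univ_two] at hIU
    exact hIU.ne_zero
  have h0 : D 0 ≠ 0 := fun h => hDdet0 (by rw [h, zero_mul])
  have h1 : D 1 ≠ 0 := fun h => hDdet0 (by rw [h, mul_zero])
  set d0 : (ZMod p)ˣ := Units.mk0 (D 0) h0 with hd0
  set d1 : (ZMod p)ˣ := Units.mk0 (D 1) h1 with hd1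
  have hsplit : d = dmat (d0 * d1⁻¹) * smat d1 := by
    apply Units.ext
    rw [Units.val_mul, hd]
    show diagonal D =
      diagonal ![((d0 * d1⁻¹ : (ZMod p)ˣ) : K), 1] * diagonal ![(d1 : K), (d1 : K)]
    rw [diag2_mul, one_mul]
    have hD : D = ![((d0 * d1⁻¹ : (ZMod p)ˣ) : K) * ((d1 : (ZMod p)ˣ) : K),
        ((d1 : (ZMod p)ˣ) : K)] := by
      refine vec2_ext ?_ ?_
      · show D 0 = ((d0 * d1⁻¹ : (ZMod p)ˣ) : K) * ((d1 : (ZMod p)ˣ) : K)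
        rw [← Units.val_mul, inv_mul_cancel_right]
        rfl
      · rfl
    rw [hD]
  rw [hu2, F_mul, F_mul, F_transvection_list hp L w hw, F_transvection_list hp L' w' hw',
    one_mul, mul_one, hsplit, F_mul, F_smat, mul_one, F_dmat_chi hp g hg]
  have hdetu : (↑u : Matrix (Fin 2) (Fin 2) K).det = D 0 * D 1 := by
    rw [← hdetD, Matrix.det_diagonal, Fin.prod_univ_two]
  have hiff : IsSquare ((↑u : Matrix (Fin 2) (Fin 2) K).det) ↔ IsSquare (d0 * d1⁻¹) := by
    have he : (↑u : Matrix (Fin 2) (Fin 2) K).det =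
        ((d0 * d1⁻¹ * (d1 * d1) : (ZMod p)ˣ) : K) := by
      rw [hdetu]
      have hgr : d0 * d1⁻¹ * (d1 * d1) = d0 * d1 := by
        rw [mul_assoc, inv_mul_cancel_left]
      rw [hgr, Units.val_mul]
      rfl
    rw [he, isSquare_coe_iff, isSquare_mul_mul_iff]
  rw [← hsplit, ← hu2]
  by_cases hs : IsSquare (d0 * d1⁻¹)
  · rw [if_pos hs, if_pos (hiff.mpr hs)]
  · rw [if_neg hs, if_neg (fun h => hs (hiff.mp h))]

end SignLegendreAux

/-- The sign of the permutation of `ℙ¹(𝔽_p)` induced by `A ∈ GL₂(𝔽_p)` is the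
quadratic character of `det A`. -/
theorem sign_eq_legendre (p : ℕ) [Fact p.Prime] (hp : Odd p)
    (A : GL (Fin 2) (ZMod p))
    (σ : Equiv.Perm (Projectivization (ZMod p) (Fin 2 → ZMod p)))
    (hσ : ∀ (v : Fin 2 → ZMod p) (hv : v ≠ 0)
      (hv' : Matrix.vecMul v (↑A : Matrix (Fin 2) (Fin 2) (ZMod p)) ≠ 0),
      σ (Projectivization.mk (ZMod p) v hv) =
        Projectivization.mk (ZMod p) (Matrix.vecMul v ↑A) hv') :
    letI : Finite (Projectivization (ZMod p) (Fin 2 → ZMod p)) := Quotient.finite _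
    letI := Classical.decEq (Projectivization (ZMod p) (Fin 2 → ZMod p))
    letI : Fintype (Projectivization (ZMod p) (Fin 2 → ZMod p)) := Fintype.ofFinite _
    Equiv.Perm.sign σ =
      if IsSquare ((↑A : Matrix (Fin 2) (Fin 2) (ZMod p)).det) then 1 else -1 := by
  letI : Finite (Projectivization (ZMod p) (Fin 2 → ZMod p)) := Quotient.finite _
  letI := Classical.decEq (Projectivization (ZMod p) (Fin 2 → ZMod p))
  letI : Fintype (Projectivization (ZMod p) (Fin 2 → ZMod p)) := Fintype.ofFinite _
  have hσ' : σ = SignLegendreAux.pi A := by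
    ext x
    induction x using Projectivization.ind with
    | h v hv =>
      rw [SignLegendreAux.pi_mk, hσ v hv (SignLegendreAux.vecMul_ne_zero A hv)]
  have hF := SignLegendreAux.F_eq_chi (p := p) hp A
  rw [SignLegendreAux.F] at hF
  rw [← hσ'] at hF
  exact hF
end

section
/- If A ∈ GL₂(𝔽_p) (p an odd prime) induces a permutation of ℙ¹(𝔽_p) for which some point has order exactly 2 in its cycle, then the induced permutation itself has order 2, i.e., A² acts as the identity on ℙ¹(𝔽_p). -/
open Matrix

/-- If some point of `ℙ¹(𝔽_p)` has order exactly `2` in its cycle under the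
permutation induced by `A ∈ GL₂(𝔽_p)`, then the permutation has order `2`. -/
theorem order_two_of_cycle_two (p : ℕ) [Fact p.Prime] (hp : Odd p)
    (A : GL (Fin 2) (ZMod p))
    (σ : Equiv.Perm (Projectivization (ZMod p) (Fin 2 → ZMod p)))
    (hσ : ∀ (v : Fin 2 → ZMod p) (hv : v ≠ 0)
      (hv' : Matrix.vecMul v (↑A : Matrix (Fin 2) (Fin 2) (ZMod p)) ≠ 0),
      σ (Projectivization.mk (ZMod p) v hv) =
        Projectivization.mk (ZMod p) (Matrix.vecMul v ↑A) hv')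
    (x : Projectivization (ZMod p) (Fin 2 → ZMod p))
    (hx2 : σ (σ x) = x) (hx1 : σ x ≠ x) :
    ∀ y : Projectivization (ZMod p) (Fin 2 → ZMod p), σ (σ y) = y := by
  set M : Matrix (Fin 2) (Fin 2) (ZMod p) := ↑A with hM
  -- vecMul by A preserves nonzero
  have key : ∀ (u : Fin 2 → ZMod p), u ≠ 0 → u ᵥ* M ≠ 0 := by
    intro u hu h0
    apply hu
    have : u ᵥ* M ᵥ* (↑A⁻¹ : Matrix (Fin 2) (Fin 2) (ZMod p)) = u := by
      rw [Matrix.vecMul_vecMul, hM]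
      rw [show (↑A : Matrix (Fin 2) (Fin 2) (ZMod p)) * ↑A⁻¹ = 1 from Units.mul_inv A]
      simp
    rw [h0] at this
    simpa using this.symm
  -- the representative of x
  obtain ⟨v, hv, rfl⟩ : ∃ v hv, x = Projectivization.mk (ZMod p) v hv :=
    ⟨x.rep, x.rep_nonzero, x.mk_rep.symm⟩
  have hvA := key v hv
  have hvAA := key _ hvA
  have hσx : σ (Projectivization.mk (ZMod p) v hv) = Projectivization.mk (ZMod p) (v ᵥ* M) hvA :=
    hσ v hv hvA
  have hσσx : σ (σ (Projectivization.mk (ZMod p) v hv)) =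
      Projectivization.mk (ZMod p) (v ᵥ* M ᵥ* M) hvAA := by
    rw [hσx]; exact hσ _ hvA hvAA
  rw [hσσx] at hx2
  rw [Projectivization.mk_eq_mk_iff] at hx2
  obtain ⟨c, hc⟩ := hx2
  -- hc : c • v = v ᵥ* M ᵥ* M
  set w := v ᵥ* M with hw
  -- w ᵥ* M ᵥ* M = c • w
  have hvc : v ᵥ* (M * M) = (c : ZMod p) • v := by
    rw [← Matrix.vecMul_vecMul, ← hw, ← hc, Units.smul_def]
  have hwc : w ᵥ* (M * M) = (c : ZMod p) • w := by
    calc w ᵥ* (M * M) = v ᵥ* (M * M) ᵥ* M := by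
          rw [hw, Matrix.vecMul_vecMul, Matrix.vecMul_vecMul, mul_assoc]
      _ = ((c : ZMod p) • v) ᵥ* M := by rw [hvc]
      _ = (c : ZMod p) • w := by rw [Matrix.smul_vecMul, hw]
  -- v, w linearly independent
  have hli : LinearIndependent (ZMod p) ![v, w] := by
    rw [LinearIndependent.pair_iff]
    intro s t hst
    by_cases ht : t = 0
    · subst ht
      simp at hst
      rcases hst with h | h
      · exact ⟨h, rfl⟩
      · exact absurd h hv
    · exfalso
      by_cases hs : s = 0
      · subst hs
        simp only [zero_smul, zero_add, smul_eq_zero] at hst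
        rcases hst with h | h
        · exact ht h
        · exact hvA h
      · apply hx1
        rw [hσx, Projectivization.mk_eq_mk_iff]
        refine ⟨Units.mk0 (-(t⁻¹ * s)) (by simp [hs, ht]), ?_⟩
        have h1 : s • v = -(t • w) := eq_neg_of_add_eq_zero_left hst
        have h2 : (-(t⁻¹ * s)) • v = w := by
          rw [neg_smul, mul_smul, h1, smul_neg, neg_neg, smul_smul,
            inv_mul_cancel₀ ht, one_smul]
        simpa [Units.smul_def, hw] using h2
  have hspan : Submodule.span (ZMod p) (Set.range ![v, w]) = ⊤ :=
    hli.span_eq_top_of_card_eq_finrank (by simp)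
  -- every nonzero u satisfies u ᵥ* (M*M) = c • u
  have huniv : ∀ u : Fin 2 → ZMod p, u ᵥ* (M * M) = (c : ZMod p) • u := by
    intro u
    have hu : u ∈ Submodule.span (ZMod p) ({v, w} : Set (Fin 2 → ZMod p)) := by
      have : Set.range ![v, w] = {v, w} := by
        ext z; simp [Fin.exists_fin_two]; tauto
      rw [← this, hspan]; trivial
    rw [Submodule.mem_span_pair] at hu
    obtain ⟨a, b, rfl⟩ := hu
    rw [Matrix.add_vecMul, Matrix.smul_vecMul, Matrix.smul_vecMul, hvc, hwc, smul_add]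
    module
  -- conclude
  intro y
  obtain ⟨u, hu, rfl⟩ : ∃ u hu, y = Projectivization.mk (ZMod p) u hu :=
    ⟨y.rep, y.rep_nonzero, y.mk_rep.symm⟩
  have huA := key u hu
  have huAA := key _ huA
  rw [hσ u hu huA, hσ _ huA huAA, Projectivization.mk_eq_mk_iff]
  have : u ᵥ* M ᵥ* M = (c : ZMod p) • u := by rw [Matrix.vecMul_vecMul]; exact huniv u
  exact ⟨c, this.symm⟩
end

section
/- For p an odd prime and A ∈ GL₂(𝔽_p), all cycles of length greater than 1 of the permutation of ℙ¹(𝔽_p) induced by A have the same length. -/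
open Matrix

instance projFinite (p : ℕ) [Fact p.Prime] :
    Finite (Projectivization (ZMod p) (Fin 2 → ZMod p)) := by
  have : Function.Surjective (fun v : {v : Fin 2 → ZMod p // v ≠ 0} =>
      Projectivization.mk (ZMod p) v.1 v.2) := by
    intro z; induction z with | h v hv => exact ⟨⟨v, hv⟩, rfl⟩
  exact Finite.of_surjective _ this

theorem vecMul_ne_zero (p : ℕ) [Fact p.Prime] (B : GL (Fin 2) (ZMod p))
    {v : Fin 2 → ZMod p} (hv : v ≠ 0) :
    vecMul v (↑B : Matrix (Fin 2) (Fin 2) (ZMod p)) ≠ 0 := by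
  intro h
  apply hv
  have : vecMul (vecMul v ↑B) (↑B⁻¹ : Matrix (Fin 2) (Fin 2) (ZMod p)) = v := by
    rw [vecMul_vecMul]; norm_cast; rw [mul_inv_cancel]; simp
  rw [h, zero_vecMul] at this
  exact this.symm

theorem pow_minimalPeriod_eq_one (p : ℕ) [Fact p.Prime]
    (A : GL (Fin 2) (ZMod p))
    (σ : Equiv.Perm (Projectivization (ZMod p) (Fin 2 → ZMod p)))
    (hσ : ∀ (v : Fin 2 → ZMod p) (hv : v ≠ 0)
      (hv' : Matrix.vecMul v (↑A : Matrix (Fin 2) (Fin 2) (ZMod p)) ≠ 0),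
      σ (Projectivization.mk (ZMod p) v hv) =
        Projectivization.mk (ZMod p) (Matrix.vecMul v ↑A) hv')
    (x : Projectivization (ZMod p) (Fin 2 → ZMod p))
    (hx : σ x ≠ x) :
    σ ^ (Function.minimalPeriod σ x) = 1 := by
  set K := ZMod p
  -- the iterated action
  have step : ∀ (v : Fin 2 → ZMod p) (hv : v ≠ 0),
      σ (Projectivization.mk K v hv) =
        Projectivization.mk K (vecMul v ↑A) (vecMul_ne_zero p A hv) :=
    fun v hv => hσ v hv _
  have iter : ∀ (k : ℕ) (v : Fin 2 → ZMod p) (hv : v ≠ 0),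
      (σ ^ k) (Projectivization.mk K v hv) =
        Projectivization.mk K (vecMul v ↑(A ^ k)) (vecMul_ne_zero p (A ^ k) hv) := by
    intro k
    induction k with
    | zero => intro v hv; simp
    | succ k ih =>
      intro v hv
      have h1 : (σ ^ (k + 1)) (Projectivization.mk K v hv)
          = (σ ^ k) (σ (Projectivization.mk K v hv)) := by
        rw [pow_succ]; simp
      rw [h1, step v hv, ih]
      have h2 : vecMul (vecMul v ↑A) (↑(A ^ k) : Matrix (Fin 2) (Fin 2) K)
          = vecMul v ↑(A ^ (k+1)) := by
        rw [vecMul_vecMul]; norm_cast; rw [← pow_succ']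
      simp_rw [h2]
  set n := Function.minimalPeriod σ x with hn
  -- n is positive
  have hper : Function.IsPeriodicPt σ (orderOf σ) x := by
    unfold Function.IsPeriodicPt Function.IsFixedPt
    simp [Equiv.Perm.iterate_eq_pow, pow_orderOf_eq_one σ]
  have hn0 : 0 < n := hper.minimalPeriod_pos (orderOf_pos σ)
  have hxn : (σ ^ n) x = x := Function.isPeriodicPt_minimalPeriod σ x
  -- representatives
  set v₁ := x.rep with hv₁def
  have hv₁ : v₁ ≠ 0 := x.rep_nonzero
  have hmkx : Projectivization.mk K v₁ hv₁ = x := x.mk_rep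
  set v₂ := vecMul v₁ (↑A : Matrix (Fin 2) (Fin 2) K) with hv₂def
  have hv₂ : v₂ ≠ 0 := vecMul_ne_zero p A hv₁
  have hσx : σ x = Projectivization.mk K v₂ hv₂ := by
    rw [← hmkx, step]
  -- scalars for v₁ and v₂
  obtain ⟨c₁, hc₁⟩ : ∃ c : Kˣ, (c : K) • v₁ = vecMul v₁ (↑(A ^ n) : Matrix (Fin 2) (Fin 2) K) := by
    have h' : Projectivization.mk K (vecMul v₁ (↑(A ^ n) : Matrix (Fin 2) (Fin 2) K))
        (vecMul_ne_zero p (A ^ n) hv₁) = Projectivization.mk K v₁ hv₁ := by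
      rw [← iter n v₁ hv₁, hmkx, hxn]
    obtain ⟨c, hc⟩ := (Projectivization.mk_eq_mk_iff K _ _ _ _).1 h'
    exact ⟨c, hc⟩
  obtain ⟨c₂, hc₂⟩ : ∃ c : Kˣ, (c : K) • v₂ = vecMul v₂ (↑(A ^ n) : Matrix (Fin 2) (Fin 2) K) := by
    have hcomm : (σ ^ n) (σ x) = σ x := by
      have : (σ ^ n) (σ x) = σ ((σ ^ n) x) := by
        rw [← Equiv.Perm.mul_apply, ← Equiv.Perm.mul_apply, ← pow_succ, ← pow_succ']
      rw [this, hxn]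
    have := iter n v₂ hv₂
    rw [← hσx, hcomm, hσx] at this
    obtain ⟨c, hc⟩ := (Projectivization.mk_eq_mk_iff K _ _ _ _).1 this.symm
    exact ⟨c, hc⟩
  -- linear independence
  have hne : Projectivization.mk K v₂ hv₂ ≠ Projectivization.mk K v₁ hv₁ := by
    rw [hmkx, ← hσx]; exact hx
  have li : LinearIndependent K ![v₂, v₁] := by
    rw [linearIndependent_fin2]
    refine ⟨by simpa using hv₁, fun a ha => ?_⟩
    apply hne
    rw [Projectivization.mk_eq_mk_iff' K _ _ _ _]
    exact ⟨a, by simpa using ha⟩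
  have hspan : Submodule.span K {v₂, v₁} = ⊤ := by
    have := li.span_eq_top_of_card_eq_finrank (by simp only [Fintype.card_fin]; exact (Module.finrank_fin_fun (ZMod p)).symm)
    rwa [show Set.range ![v₂, v₁] = {v₂, v₁} by simp [Set.range_comp]; ext w; simp [Fin.exists_fin_two]; tauto] at this
  have hmem : ∀ w : Fin 2 → K, ∃ s t : K, s • v₂ + t • v₁ = w := by
    intro w
    have : w ∈ Submodule.span K {v₂, v₁} := by rw [hspan]; trivial
    exact Submodule.mem_span_pair.1 this
  -- find common scalar
  have key : ∃ c : Kˣ, ((c : K) • v₁ = vecMul v₁ (↑(A ^ n) : Matrix (Fin 2) (Fin 2) K))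
      ∧ ((c : K) • v₂ = vecMul v₂ (↑(A ^ n) : Matrix (Fin 2) (Fin 2) K)) := by
    by_cases h2 : (σ ^ 2) x = x
    · -- n = 2, σ swaps the two lines
      have hn2 : n = 2 := by
        have hdvd : n ∣ 2 := Function.IsPeriodicPt.minimalPeriod_dvd h2
        rcases (Nat.dvd_prime Nat.prime_two).1 hdvd with h | h
        · exfalso; apply hx
          have h1 := Function.iterate_minimalPeriod (f := ⇑σ) (x := x)
          rw [← hn, h] at h1
          simpa using h1
        · exact h
      have hswap : σ (σ x) = x := by
        have : (σ ^ 2) x = σ (σ x) := by rw [pow_succ, pow_one]; simp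
        rw [← this, h2]
      obtain ⟨d, hd⟩ : ∃ d : Kˣ, (d : K) • v₁ = vecMul v₂ (↑A : Matrix (Fin 2) (Fin 2) K) := by
        have := step v₂ hv₂
        rw [← hσx, hswap, ← hmkx] at this
        obtain ⟨dd, hdd⟩ := (Projectivization.mk_eq_mk_iff K _ _ _ _).1 this.symm
        exact ⟨dd, hdd⟩
      have hA2 : (↑(A ^ 2) : Matrix (Fin 2) (Fin 2) K)
          = (↑A : Matrix (Fin 2) (Fin 2) K) * (↑A : Matrix (Fin 2) (Fin 2) K) := by
        rw [pow_two]; rfl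
      refine ⟨d, ?_, ?_⟩
      · rw [hn2, hA2, ← vecMul_vecMul, ← hv₂def]; exact hd
      · rw [hn2, hA2, ← vecMul_vecMul, ← hd, smul_vecMul, ← hv₂def]
    · -- σ² x is a third line
      set v₃ := vecMul v₂ (↑A : Matrix (Fin 2) (Fin 2) K) with hv₃def
      have hv₃ : v₃ ≠ 0 := vecMul_ne_zero p A hv₂
      have hσ2x : (σ ^ 2) x = Projectivization.mk K v₃ hv₃ := by
        have : (σ ^ 2) x = σ (σ x) := by rw [pow_succ, pow_one]; simp
        rw [this, hσx, step]
      obtain ⟨c₃, hc₃⟩ : ∃ c : Kˣ,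
          (c : K) • v₃ = vecMul v₃ (↑(A ^ n) : Matrix (Fin 2) (Fin 2) K) := by
        have hcomm : (σ ^ n) ((σ ^ 2) x) = (σ ^ 2) x := by
          rw [← Equiv.Perm.mul_apply, ← pow_add, add_comm, pow_add, Equiv.Perm.mul_apply, hxn]
        have := iter n v₃ hv₃
        rw [← hσ2x, hcomm, hσ2x] at this
        obtain ⟨c, hc⟩ := (Projectivization.mk_eq_mk_iff K _ _ _ _).1 this.symm
        exact ⟨c, hc⟩
      obtain ⟨s, t, hst⟩ := hmem v₃
      have hs : s ≠ 0 := by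
        rintro rfl
        apply hx
        have ht : t ≠ 0 := by rintro rfl; simp at hst; exact hv₃ hst.symm
        have : Projectivization.mk K v₃ hv₃ = Projectivization.mk K v₁ hv₁ := by
          rw [Projectivization.mk_eq_mk_iff' K _ _ _ _]
          exact ⟨t, by simpa using hst⟩
        have h2' : (σ ^ 2) x = x := by rw [hσ2x, this, hmkx]
        exact absurd h2' h2
      have ht : t ≠ 0 := by
        rintro rfl
        apply hx
        have hs' : s ≠ 0 := by rintro rfl; simp at hst; exact hv₃ hst.symm
        have : Projectivization.mk K v₃ hv₃ = Projectivization.mk K v₂ hv₂ := by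
          rw [Projectivization.mk_eq_mk_iff' K _ _ _ _]
          exact ⟨s, by simpa using hst⟩
        have h2' : (σ ^ 2) x = σ x := by rw [hσ2x, this, hσx]
        have : (σ ^ 2) x = σ (σ x) := by rw [pow_succ, pow_one]; simp
        rw [this] at h2'
        exact σ.injective h2'
      -- compare coefficients
      have hcomp : (s * c₂ : K) • v₂ + (t * c₁ : K) • v₁
          = ((c₃ : K) * s) • v₂ + ((c₃ : K) * t) • v₁ := by
        have e1 : vecMul v₃ (↑(A ^ n) : Matrix (Fin 2) (Fin 2) K)
            = (s * c₂ : K) • v₂ + (t * c₁ : K) • v₁ := by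
          rw [← hst, add_vecMul, smul_vecMul, smul_vecMul, ← hc₁, ← hc₂]
          module
        have e2 : (c₃ : K) • v₃ = ((c₃ : K) * s) • v₂ + ((c₃ : K) * t) • v₁ := by
          rw [← hst]; module
        rw [← e1, ← hc₃, e2]
      obtain ⟨e1, e2⟩ := li.eq_of_pair hcomp
      have hcc : (c₁ : K) = (c₂ : K) := by
        have h1 : (c₂ : K) = c₃ := by
          apply mul_left_cancel₀ hs
          rw [mul_comm (c₃ : K) s] at e1
          exact e1
        have h2 : (c₁ : K) = c₃ := by
          apply mul_left_cancel₀ ht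
          rw [mul_comm (c₃ : K) t] at e2
          exact e2
        rw [h1, h2]
      exact ⟨c₁, hc₁, by rw [hcc]; exact hc₂⟩
  -- conclude σ^n = 1
  obtain ⟨c, hc1, hc2⟩ := key
  ext z
  induction z with
  | h w hw =>
    rw [iter n w hw, Equiv.Perm.coe_one, id_eq]
    rw [Projectivization.mk_eq_mk_iff K _ _ _ _]
    refine ⟨c, ?_⟩
    obtain ⟨s, t, hst⟩ := hmem w
    rw [← hst, add_vecMul, smul_vecMul, smul_vecMul, ← hc1, ← hc2, smul_add]
    simp [Units.smul_def, smul_smul, mul_comm]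

/-- All cycles of length greater than `1` of the permutation of `ℙ¹(𝔽_p)`
induced by `A ∈ GL₂(𝔽_p)` have the same length. -/
theorem cycles_same_length (p : ℕ) [Fact p.Prime] (hp : Odd p)
    (A : GL (Fin 2) (ZMod p))
    (σ : Equiv.Perm (Projectivization (ZMod p) (Fin 2 → ZMod p)))
    (hσ : ∀ (v : Fin 2 → ZMod p) (hv : v ≠ 0)
      (hv' : Matrix.vecMul v (↑A : Matrix (Fin 2) (Fin 2) (ZMod p)) ≠ 0),
      σ (Projectivization.mk (ZMod p) v hv) =
        Projectivization.mk (ZMod p) (Matrix.vecMul v ↑A) hv')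
    (x y : Projectivization (ZMod p) (Fin 2 → ZMod p))
    (hx : σ x ≠ x) (hy : σ y ≠ y) :
    Function.minimalPeriod σ x = Function.minimalPeriod σ y := by
  have hnx := pow_minimalPeriod_eq_one p A σ hσ x hx
  have hny := pow_minimalPeriod_eq_one p A σ hσ y hy
  apply Nat.dvd_antisymm
  · apply Function.IsPeriodicPt.minimalPeriod_dvd
    unfold Function.IsPeriodicPt Function.IsFixedPt
    simp [Equiv.Perm.iterate_eq_pow, hny]
  · apply Function.IsPeriodicPt.minimalPeriod_dvd
    unfold Function.IsPeriodicPt Function.IsFixedPt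
    simp [Equiv.Perm.iterate_eq_pow, hnx]
end
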